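/- arXiv:1903.04335 — 4 statements merged into one kernel-verified Lean document; each statement's English description precedes it below -/
import Mathlib

section
/- Let K = ⋃_{ℓ=1}^L [a_ℓ, b_ℓ] ⊆ [−1,1] with −1 = a_1 < b_1 < a_2 < ⋯ < a_L < b_L = 1, let w be continuous and strictly positive on K, and let d ≥ N. Then the map P ↦ sslash P sslash_d is a norm on the vector space of real polynomials of degree at most N; in particular it is finite, absolutely homogeneous, satisfies the triangle inequality, and sslash P sslash_d = 0 implies P = 0. -/
open MeasureTheory Filter Polynomial

/-- The `(d+1) × (d+1)` symmetric Toeplitz matrix built from a vector `y ∈ ℝ^{d+1}`,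
with entries `y_{|i−j|}`. -/
noncomputable def toepFin (d : ℕ) (y : Fin (d + 1) → ℝ) :
    Matrix (Fin (d + 1)) (Fin (d + 1)) ℝ :=
  fun i j => y ⟨(((i : ℕ) : ℤ) - ((j : ℕ) : ℤ)).natAbs, by omega⟩

/-- The transplantation `P_ℓ(x) = P(((bℓ−aℓ)x + aℓ + bℓ)/2)` of a polynomial
from `[aℓ, bℓ]` to `[-1, 1]`. -/
noncomputable def transplant (aℓ bℓ : ℝ) (P : Polynomial ℝ) : Polynomial ℝ :=
  P.comp (Polynomial.C ((bℓ - aℓ) / 2) * Polynomial.X + Polynomial.C ((aℓ + bℓ) / 2))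

/-- The entries `J^ℓ_{k,n} = ∫_0^π cos(kθ) sin((n+1)θ) / w_ℓ(cos θ) dθ`, where
`w_ℓ(x) = w(((bℓ−aℓ)x + aℓ + bℓ)/2)` is the transplantation of the weight `w`. -/
noncomputable def Jent (aℓ bℓ : ℝ) (w : ℝ → ℝ) (k n : ℕ) : ℝ :=
  ∫ θ in (0:ℝ)..Real.pi,
    Real.cos (k * θ) * Real.sin ((n + 1) * θ) /
      w (((bℓ - aℓ) * Real.cos θ + aℓ + bℓ) / 2)

/-- The weighted `L1` norm `‖P/w‖_{L1(K)} = ∑_ℓ ∫_{a_ℓ}^{b_ℓ} |P(t)|/w(t) dt`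
on `K = ⋃_{ℓ<L} [a ℓ, b ℓ]`. -/
noncomputable def L1K (L : ℕ) (a b : ℕ → ℝ) (w : ℝ → ℝ) (P : Polynomial ℝ) : ℝ :=
  ∑ ℓ ∈ Finset.range L, ∫ t in (a ℓ)..(b ℓ), |P.eval t| / w t

/-- The ersatz norm `⫽P⫽_d`: the infimum of
`∑_ℓ ((b_ℓ−a_ℓ)/2)(y^{ℓ,+}_0 + y^{ℓ,−}_0)` over vectors `y^{ℓ,±} ∈ ℝ^{d+1}` with
`y^{ℓ,+} − y^{ℓ,−} = J^{ℓ,d} W^ℓ p` and `Toep_d(y^{ℓ,±}) ⪰ 0`, where `q ℓ = W^ℓ p` is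
the vector of second-kind Chebyshev coefficients of the transplantation `P_ℓ`. -/
noncomputable def ersatz (L N d : ℕ) (a b : ℕ → ℝ) (w : ℝ → ℝ) (P : Polynomial ℝ) : ℝ :=
  sInf { s : ℝ |
    ∃ q : ℕ → Fin (N + 1) → ℝ,
      (∀ ℓ < L, transplant (a ℓ) (b ℓ) P
          = ∑ n : Fin (N + 1), Polynomial.C (q ℓ n) * Polynomial.Chebyshev.U ℝ ((n : ℕ) : ℤ)) ∧
      ∃ yp ym : ℕ → Fin (d + 1) → ℝ,
        (∀ ℓ < L, ∀ k : Fin (d + 1),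
            yp ℓ k - ym ℓ k
              = ∑ n : Fin (N + 1), Jent (a ℓ) (b ℓ) w (k : ℕ) (n : ℕ) * q ℓ n) ∧
        (∀ ℓ < L, (toepFin d (yp ℓ)).PosSemidef ∧ (toepFin d (ym ℓ)).PosSemidef) ∧
        s = ∑ ℓ ∈ Finset.range L, ((b ℓ - a ℓ) / 2) * (yp ℓ 0 + ym ℓ 0) }

open Matrix
open scoped Pointwise

lemma toep_apply (d : ℕ) (y : Fin (d+1) → ℝ) (i j : Fin (d+1)) :
    toepFin d y i j = y ⟨(((i : ℕ) : ℤ) - ((j : ℕ) : ℤ)).natAbs, by omega⟩ := rfl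

lemma toep_diag (d : ℕ) (y : Fin (d+1) → ℝ) (i : Fin (d+1)) :
    toepFin d y i i = y 0 := by
  rw [toep_apply]; congr 1; apply Fin.ext; simp

lemma toep_0k (d : ℕ) (y : Fin (d+1) → ℝ) (k : Fin (d+1)) :
    toepFin d y 0 k = y k := by
  rw [toep_apply]; congr 1; apply Fin.ext; simp

lemma toep_k0 (d : ℕ) (y : Fin (d+1) → ℝ) (k : Fin (d+1)) :
    toepFin d y k 0 = y k := by
  rw [toep_apply]; congr 1

lemma toep_hermitian (d : ℕ) (y : Fin (d+1) → ℝ) : (toepFin d y).IsHermitian := by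
  ext i j
  simp only [Matrix.conjTranspose_apply, toep_apply, star_trivial]
  congr 2
  omega

lemma psd_quad (d : ℕ) (y : Fin (d+1) → ℝ) (h : (toepFin d y).PosSemidef)
    (x : Fin (d+1) → ℝ) : 0 ≤ dotProduct x (toepFin d y *ᵥ x) := by
  simpa using h.dotProduct_mulVec_nonneg x

lemma psd_abs {d : ℕ} {y : Fin (d+1) → ℝ} (h : (toepFin d y).PosSemidef)
    (k : Fin (d+1)) : |y k| ≤ y 0 := by
  have h1 := psd_quad d y h (Pi.single 0 1 + Pi.single k 1)
  have h2 := psd_quad d y h (Pi.single 0 1 - Pi.single k 1)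
  simp only [Matrix.mulVec_add, Matrix.mulVec_sub, Matrix.mulVec_single_one,
    dotProduct_add, dotProduct_sub, add_dotProduct,
    sub_dotProduct, single_dotProduct, Matrix.col_apply, mul_one, one_mul] at h1 h2
  rw [toep_diag, toep_diag, toep_0k, toep_k0] at h1 h2
  rw [abs_le]; constructor <;> linarith

lemma psd_y0 {d : ℕ} {y : Fin (d+1) → ℝ} (h : (toepFin d y).PosSemidef) :
    0 ≤ y 0 := le_trans (abs_nonneg _) (psd_abs h 0)

lemma toep_split (d : ℕ) (z : Fin (d+1) → ℝ) (t : ℝ) :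
    toepFin d (z + Pi.single 0 t) = toepFin d z + t • (1 : Matrix (Fin (d+1)) (Fin (d+1)) ℝ) := by
  ext i j
  simp only [toepFin, Pi.add_apply, Matrix.add_apply, Matrix.smul_apply, Matrix.one_apply]
  congr 1
  rcases eq_or_ne i j with h | h
  · subst h
    rw [if_pos rfl]
    have : (⟨(((i : ℕ) : ℤ) - ((i : ℕ) : ℤ)).natAbs, by omega⟩ : Fin (d+1)) = 0 := by
      apply Fin.ext; simp
    rw [this, Pi.single_eq_same, smul_eq_mul, mul_one]
  · rw [if_neg h]
    have : (⟨(((i : ℕ) : ℤ) - ((j : ℕ) : ℤ)).natAbs, by omega⟩ : Fin (d+1)) ≠ 0 := by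
      simp only [ne_eq, Fin.ext_iff, Fin.val_zero]
      intro hc
      apply h; apply Fin.ext; omega
    rw [Pi.single_eq_of_ne this, smul_zero]

lemma toep_tI_psd (d : ℕ) (z : Fin (d+1) → ℝ) (t : ℝ)
    (ht : ((d:ℝ)+1) * ∑ k, |z k| ≤ t) :
    (toepFin d (z + Pi.single 0 t)).PosSemidef := by
  set M := ∑ k, |z k| with hMdef
  have hM : 0 ≤ M := Finset.sum_nonneg fun _ _ => abs_nonneg _
  have habs : ∀ i j, |toepFin d z i j| ≤ M := by
    intro i j
    exact Finset.single_le_sum (f := fun k => |z k|) (fun _ _ => abs_nonneg _) (Finset.mem_univ _)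
  refine Matrix.PosSemidef.of_dotProduct_mulVec_nonneg ?_ ?_
  · exact toep_hermitian d _
  · intro x
    rw [star_trivial, toep_split, Matrix.add_mulVec, dotProduct_add]
    have hS : 0 ≤ ∑ i, (x i)^2 := Finset.sum_nonneg fun _ _ => sq_nonneg _
    have h2 : dotProduct x ((t • (1 : Matrix (Fin (d+1)) (Fin (d+1)) ℝ)) *ᵥ x)
        = t * ∑ i, (x i)^2 := by
      simp [Matrix.smul_mulVec, Matrix.one_mulVec, dotProduct_smul,
        dotProduct, Finset.mul_sum, sq]
      exact Finset.sum_congr rfl fun i _ => by ring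
    have h1 : -(((d:ℝ)+1) * M * ∑ i, (x i)^2) ≤ dotProduct x (toepFin d z *ᵥ x) := by
      have hexp : dotProduct x (toepFin d z *ᵥ x) = ∑ i, ∑ j, x i * (toepFin d z i j * x j) := by
        simp [dotProduct, Matrix.mulVec, Finset.mul_sum]
      rw [hexp]
      have hterm : ∀ i ∈ Finset.univ, ∀ j ∈ Finset.univ,
          (-(M/2)) * (x i)^2 + (-(M/2)) * (x j)^2 ≤ x i * (toepFin d z i j * x j) := by
        intro i _ j _
        have hb : |x i * (toepFin d z i j * x j)| ≤ M * ((x i)^2 + (x j)^2) / 2 := by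
          rw [abs_mul, abs_mul]
          nlinarith [habs i j, abs_nonneg (x i), abs_nonneg (x j), sq_abs (x i), sq_abs (x j),
            two_mul_le_add_sq (|x i|) (|x j|), abs_nonneg (toepFin d z i j)]
        have := neg_abs_le (x i * (toepFin d z i j * x j))
        linarith
      have hsum : ∑ i, ∑ j, ((-(M/2)) * (x i)^2 + (-(M/2)) * (x j)^2)
          ≤ ∑ i, ∑ j, x i * (toepFin d z i j * x j) :=
        Finset.sum_le_sum fun i hi => Finset.sum_le_sum (hterm i hi)
      refine le_trans (le_of_eq ?_) hsum
      have hcard : ((Finset.univ : Finset (Fin (d+1))).card : ℝ) = (d:ℝ)+1 := by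
        simp [Finset.card_univ]
      calc -(((d:ℝ)+1) * M * ∑ i, (x i)^2)
          = ((d:ℝ)+1) * ((-(M/2)) * ∑ i, (x i)^2) + ((-(M/2)) * ∑ j, (x j)^2) * ((d:ℝ)+1) := by
            ring
        _ = ∑ i, ((-(M/2)) * (x i)^2 * ((d:ℝ)+1) + (-(M/2)) * ∑ j, (x j)^2) := by
            rw [Finset.sum_add_distrib, Finset.sum_const, Finset.card_univ]
            rw [← Finset.sum_mul, ← Finset.mul_sum]
            simp only [Fintype.card_fin, nsmul_eq_mul]
            push_cast
            ring
        _ = ∑ i, ∑ j, ((-(M/2)) * (x i)^2 + (-(M/2)) * (x j)^2) := by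
            refine Finset.sum_congr rfl fun i _ => ?_
            rw [Finset.sum_add_distrib, Finset.sum_const, Finset.card_univ, ← Finset.mul_sum]
            simp only [Fintype.card_fin, nsmul_eq_mul]
            push_cast
            ring
    have h3 : ((d:ℝ)+1) * M * ∑ i, (x i)^2 ≤ t * ∑ i, (x i)^2 :=
      mul_le_mul_of_nonneg_right ht hS
    rw [h2]
    linarith

lemma toep_add (d : ℕ) (y z : Fin (d+1) → ℝ) :
    toepFin d (y + z) = toepFin d y + toepFin d z := by
  ext i j; simp [toepFin]

lemma toep_smul (d : ℕ) (c : ℝ) (y : Fin (d+1) → ℝ) :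
    toepFin d (c • y) = c • toepFin d y := by
  ext i j; simp [toepFin]

lemma psd_add {d : ℕ} {A B : Matrix (Fin (d+1)) (Fin (d+1)) ℝ}
    (hA : A.PosSemidef) (hB : B.PosSemidef) : (A + B).PosSemidef := by
  refine .of_dotProduct_mulVec_nonneg (hA.1.add hB.1) fun x => ?_
  have := hA.dotProduct_mulVec_nonneg x
  have := hB.dotProduct_mulVec_nonneg x
  simp only [Matrix.add_mulVec, dotProduct_add] at *
  linarith

lemma psd_smul {d : ℕ} {A : Matrix (Fin (d+1)) (Fin (d+1)) ℝ} {c : ℝ}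
    (hA : A.PosSemidef) (hc : 0 ≤ c) : (c • A).PosSemidef := by
  refine .of_dotProduct_mulVec_nonneg (by
    unfold Matrix.IsHermitian at *
    rw [Matrix.conjTranspose_smul, hA.1]
    simp) fun x => ?_
  have := hA.dotProduct_mulVec_nonneg x
  simp only [Matrix.smul_mulVec, dotProduct_smul, smul_eq_mul] at *
  exact mul_nonneg hc this

open Polynomial.Chebyshev in
lemma U_deg_coeff : ∀ n : ℕ, (U ℝ (n:ℤ)).natDegree ≤ n ∧ 0 < (U ℝ (n:ℤ)).coeff n := by
  intro n
  induction n using Nat.strong_induction_on with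
  | _ n ih =>
    match n with
    | 0 => simp [U_zero]
    | 1 => constructor
           · simpa [U_one] using natDegree_linear_le (a := (2:ℝ)) (b := 0)
           · simp [U_one]
    | (m+2) =>
      have h1 := ih (m+1) (by omega)
      have h0 := ih m (by omega)
      have hrec : U ℝ ((m+2 : ℕ) : ℤ) = 2 * Polynomial.X * U ℝ ((m+1 : ℕ) : ℤ) - U ℝ (m : ℤ) := by
        push_cast
        exact U_add_two ℝ m
      constructor
      · rw [hrec]
        refine le_trans (natDegree_sub_le _ _) ?_
        simp only [max_le_iff]
        constructor
        · refine le_trans (natDegree_mul_le) ?_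
          have h2X : (2 * Polynomial.X : ℝ[X]).natDegree ≤ 1 := by
            simpa using natDegree_linear_le (a := (2:ℝ)) (b := 0)
          have := h1.1
          omega
        · exact le_trans h0.1 (by omega)
      · rw [hrec, coeff_sub]
        have hz : (U ℝ (m:ℤ)).coeff (m+2) = 0 :=
          coeff_eq_zero_of_natDegree_lt (by omega)
        have h2X : (2 * Polynomial.X * U ℝ ((m+1 : ℕ):ℤ)).coeff (m+2)
            = 2 * (U ℝ ((m+1 : ℕ):ℤ)).coeff (m+1) := by
          rw [mul_assoc, show (2 : ℝ[X]) = Polynomial.C 2 by rw [map_ofNat], coeff_C_mul, coeff_X_mul]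
        rw [hz, h2X]
        push_cast at h1 ⊢
        linarith [h1.2]

open Polynomial.Chebyshev in
lemma T_deg_coeff : ∀ n : ℕ, (T ℝ (n:ℤ)).natDegree ≤ n ∧ 0 < (T ℝ (n:ℤ)).coeff n := by
  intro n
  induction n using Nat.strong_induction_on with
  | _ n ih =>
    match n with
    | 0 => simp [T_zero]
    | 1 => simp [T_one]
    | (m+2) =>
      have h1 := ih (m+1) (by omega)
      have h0 := ih m (by omega)
      have hrec : T ℝ ((m+2 : ℕ) : ℤ) = 2 * Polynomial.X * T ℝ ((m+1 : ℕ) : ℤ) - T ℝ (m : ℤ) := by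
        push_cast
        exact T_add_two ℝ m
      constructor
      · rw [hrec]
        refine le_trans (natDegree_sub_le _ _) ?_
        simp only [max_le_iff]
        constructor
        · refine le_trans (natDegree_mul_le) ?_
          have h2X : (2 * Polynomial.X : ℝ[X]).natDegree ≤ 1 := by
            simpa using natDegree_linear_le (a := (2:ℝ)) (b := 0)
          have := h1.1
          omega
        · exact le_trans h0.1 (by omega)
      · rw [hrec, coeff_sub]
        have hz : (T ℝ (m:ℤ)).coeff (m+2) = 0 :=
          coeff_eq_zero_of_natDegree_lt (by omega)
        have h2X : (2 * Polynomial.X * T ℝ ((m+1 : ℕ):ℤ)).coeff (m+2)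
            = 2 * (T ℝ ((m+1 : ℕ):ℤ)).coeff (m+1) := by
          rw [mul_assoc, show (2 : ℝ[X]) = Polynomial.C 2 by rw [map_ofNat], coeff_C_mul, coeff_X_mul]
        rw [hz, h2X]
        push_cast at h1 ⊢
        linarith [h1.2]

lemma exists_rep (v : ℕ → ℝ[X]) (hdeg : ∀ k, (v k).natDegree ≤ k)
    (hc : ∀ k, (v k).coeff k ≠ 0) :
    ∀ (N : ℕ) (P : ℝ[X]), P.natDegree ≤ N →
      ∃ c : Fin (N+1) → ℝ, P = ∑ k : Fin (N+1), Polynomial.C (c k) * v k := by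
  intro N
  induction N with
  | zero =>
    intro P hP
    refine ⟨fun _ => P.coeff 0 / (v 0).coeff 0, ?_⟩
    rw [Fin.sum_univ_one]
    have hv : v 0 = Polynomial.C ((v 0).coeff 0) := (Polynomial.eq_C_of_natDegree_le_zero (hdeg 0))
    have hP0 : P = Polynomial.C (P.coeff 0) := Polynomial.eq_C_of_natDegree_le_zero hP
    calc P = Polynomial.C (P.coeff 0) := hP0
      _ = Polynomial.C (P.coeff 0 / (v 0).coeff 0) * Polynomial.C ((v 0).coeff 0) := by
            rw [← Polynomial.C_mul, div_mul_cancel₀ _ (hc 0)]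
      _ = Polynomial.C (P.coeff 0 / (v 0).coeff 0) * v 0 := by rw [← hv]
      _ = _ := rfl
  | succ N ih =>
    intro P hP
    set t := P.coeff (N+1) / (v (N+1)).coeff (N+1) with htdef
    set Q := P - Polynomial.C t * v (N+1) with hQdef
    have hQ : Q.natDegree ≤ N := by
      rw [Polynomial.natDegree_le_iff_coeff_eq_zero]
      intro m hm
      rw [hQdef, Polynomial.coeff_sub, Polynomial.coeff_C_mul]
      rcases eq_or_lt_of_le (Nat.succ_le_of_lt hm) with h | h
      · rw [← h, htdef, div_mul_cancel₀ _ (hc (N+1)), sub_self]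
      · rw [Polynomial.coeff_eq_zero_of_natDegree_lt (lt_of_le_of_lt hP h),
          Polynomial.coeff_eq_zero_of_natDegree_lt (lt_of_le_of_lt (hdeg (N+1)) h)]
        ring
    obtain ⟨c, hcQ⟩ := ih Q hQ
    refine ⟨Fin.snoc c t, ?_⟩
    rw [Fin.sum_univ_castSucc]
    have hcast : ∀ k : Fin (N+1),
        Polynomial.C ((Fin.snoc c t : Fin (N+2) → ℝ) (Fin.castSucc k)) * v ((Fin.castSucc k : Fin (N+2)) : ℕ)
          = Polynomial.C (c k) * v k := by
      intro k
      rw [Fin.snoc_castSucc]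
      rfl
    rw [Finset.sum_congr rfl (fun k _ => hcast k), ← hcQ, Fin.snoc_last]
    simp [hQdef]

lemma transplant_add (aℓ bℓ : ℝ) (P Q : ℝ[X]) :
    transplant aℓ bℓ (P + Q) = transplant aℓ bℓ P + transplant aℓ bℓ Q :=
  Polynomial.add_comp

lemma transplant_smul (aℓ bℓ c : ℝ) (P : ℝ[X]) :
    transplant aℓ bℓ (c • P) = c • transplant aℓ bℓ P :=
  Polynomial.smul_comp _ _ _

lemma transplant_natDegree_le (aℓ bℓ : ℝ) (P : ℝ[X]) {N : ℕ} (hP : P.natDegree ≤ N) :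
    (transplant aℓ bℓ P).natDegree ≤ N := by
  refine le_trans Polynomial.natDegree_comp_le ?_
  have := Polynomial.natDegree_linear_le (a := (bℓ - aℓ)/2) (b := (aℓ + bℓ)/2)
  calc P.natDegree * (Polynomial.C ((bℓ - aℓ) / 2) * Polynomial.X
        + Polynomial.C ((aℓ + bℓ) / 2)).natDegree ≤ N * 1 :=
      Nat.mul_le_mul hP this
    _ = N := by ring

lemma transplant_eq_zero (aℓ bℓ : ℝ) (h : aℓ < bℓ) (P : ℝ[X])
    (hz : transplant aℓ bℓ P = 0) : P = 0 := by
  set c := (bℓ - aℓ) / 2 with hc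
  have hc0 : c ≠ 0 := by rw [hc]; intro hh; nlinarith [sub_pos.mpr h]
  set e := (aℓ + bℓ) / 2 with he
  set g := Polynomial.C c⁻¹ * Polynomial.X + Polynomial.C (-(e/c)) with hg
  have hfg : (Polynomial.C c * Polynomial.X + Polynomial.C e).comp g = Polynomial.X := by
    rw [hg, Polynomial.add_comp, Polynomial.mul_comp, Polynomial.C_comp, Polynomial.X_comp,
      Polynomial.C_comp]
    rw [mul_add, ← mul_assoc, ← Polynomial.C_mul, mul_inv_cancel₀ hc0, Polynomial.C_1, one_mul,
      ← Polynomial.C_mul, add_assoc, ← Polynomial.C_add]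
    have : c * -(e/c) + e = 0 := by field_simp; ring
    rw [this, Polynomial.C_0, add_zero]
  have : P = ((transplant aℓ bℓ P).comp g) := by
    rw [transplant, Polynomial.comp_assoc, hfg, Polynomial.comp_X]
  rw [this, hz, Polynomial.zero_comp]


def SS (L N d : ℕ) (a b : ℕ → ℝ) (w : ℝ → ℝ) (P : Polynomial ℝ) : Set ℝ :=
  { s : ℝ |
    ∃ q : ℕ → Fin (N + 1) → ℝ,
      (∀ ℓ < L, transplant (a ℓ) (b ℓ) P
          = ∑ n : Fin (N + 1), Polynomial.C (q ℓ n) * Polynomial.Chebyshev.U ℝ ((n : ℕ) : ℤ)) ∧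
      ∃ yp ym : ℕ → Fin (d + 1) → ℝ,
        (∀ ℓ < L, ∀ k : Fin (d + 1),
            yp ℓ k - ym ℓ k
              = ∑ n : Fin (N + 1), Jent (a ℓ) (b ℓ) w (k : ℕ) (n : ℕ) * q ℓ n) ∧
        (∀ ℓ < L, (toepFin d (yp ℓ)).PosSemidef ∧ (toepFin d (ym ℓ)).PosSemidef) ∧
        s = ∑ ℓ ∈ Finset.range L, ((b ℓ - a ℓ) / 2) * (yp ℓ 0 + ym ℓ 0) }

lemma ersatz_eq_sInf (L N d : ℕ) (a b : ℕ → ℝ) (w : ℝ → ℝ) (P : Polynomial ℝ) :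
    ersatz L N d a b w P = sInf (SS L N d a b w P) := rfl

section SSfacts

variable {L N d : ℕ} {a b : ℕ → ℝ} {w : ℝ → ℝ} {P Q : Polynomial ℝ}

lemma SS_nonneg (hab : ∀ ℓ < L, a ℓ < b ℓ) :
    ∀ s ∈ SS L N d a b w P, (0:ℝ) ≤ s := by
  rintro s ⟨q, hq, yp, ym, hdiff, hpsd, rfl⟩
  refine Finset.sum_nonneg fun ℓ hℓ => ?_
  rw [Finset.mem_range] at hℓ
  have h1 := psd_y0 (hpsd ℓ hℓ).1
  have h2 := psd_y0 (hpsd ℓ hℓ).2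
  have := hab ℓ hℓ
  apply mul_nonneg <;> linarith

lemma SS_bddBelow (hab : ∀ ℓ < L, a ℓ < b ℓ) : BddBelow (SS L N d a b w P) :=
  ⟨0, fun s hs => SS_nonneg hab s hs⟩

lemma SS_nonempty (hP : P.natDegree ≤ N) : (SS L N d a b w P).Nonempty := by
  have H : ∀ ℓ : ℕ, ∃ c : Fin (N+1) → ℝ, transplant (a ℓ) (b ℓ) P
      = ∑ k : Fin (N+1), Polynomial.C (c k) * Polynomial.Chebyshev.U ℝ ((k:ℕ) : ℤ) := by
    intro ℓ
    exact exists_rep (fun k => Polynomial.Chebyshev.U ℝ (k:ℤ))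
      (fun k => (U_deg_coeff k).1) (fun k => ne_of_gt (U_deg_coeff k).2) N _
      (transplant_natDegree_le _ _ _ hP)
  choose q hq using H
  set z : ℕ → Fin (d+1) → ℝ :=
    fun ℓ k => ∑ n : Fin (N+1), Jent (a ℓ) (b ℓ) w (k:ℕ) (n:ℕ) * q ℓ n with hz
  set t : ℕ → ℝ := fun ℓ => ((d:ℝ)+1) * ∑ k, |z ℓ k| with htd
  refine ⟨_, q, fun ℓ _ => hq ℓ, (fun ℓ => z ℓ + Pi.single 0 (t ℓ)),
    (fun ℓ => Pi.single 0 (t ℓ)), fun ℓ _ k => by simp [hz], fun ℓ _ => ?_, rfl⟩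
  constructor
  · exact toep_tI_psd d (z ℓ) (t ℓ) le_rfl
  · show (toepFin d (Pi.single 0 (t ℓ))).PosSemidef
    have h0 : (Pi.single 0 (t ℓ) : Fin (d+1) → ℝ)
        = (0 : Fin (d+1) → ℝ) + Pi.single 0 (t ℓ) := by rw [zero_add]
    rw [h0]
    apply toep_tI_psd
    simp only [Pi.zero_apply, abs_zero, Finset.sum_const_zero, mul_zero]
    rw [htd]
    apply mul_nonneg (by positivity)
    exact Finset.sum_nonneg fun _ _ => abs_nonneg _

lemma SS_add_mem {s t : ℝ} (hs : s ∈ SS L N d a b w P) (ht : t ∈ SS L N d a b w Q) :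
    s + t ∈ SS L N d a b w (P + Q) := by
  obtain ⟨q1, hq1, yp1, ym1, hd1, hp1, rfl⟩ := hs
  obtain ⟨q2, hq2, yp2, ym2, hd2, hp2, rfl⟩ := ht
  refine ⟨q1 + q2, ?_, yp1 + yp2, ym1 + ym2, ?_, ?_, ?_⟩
  · intro ℓ hℓ
    rw [transplant_add, hq1 ℓ hℓ, hq2 ℓ hℓ, ← Finset.sum_add_distrib]
    refine Finset.sum_congr rfl fun n _ => ?_
    simp only [Pi.add_apply, Polynomial.C_add]
    ring
  · intro ℓ hℓ k
    have e1 := hd1 ℓ hℓ k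
    have e2 := hd2 ℓ hℓ k
    simp only [Pi.add_apply]
    have h3 : ∑ n : Fin (N+1), Jent (a ℓ) (b ℓ) w (k:ℕ) (n:ℕ) * (q1 ℓ n + q2 ℓ n)
        = (yp1 ℓ k - ym1 ℓ k) + (yp2 ℓ k - ym2 ℓ k) := by
      rw [e1, e2, ← Finset.sum_add_distrib]
      exact Finset.sum_congr rfl fun n _ => by ring
    rw [h3]; ring
  · intro ℓ hℓ
    constructor
    · have : toepFin d ((yp1 + yp2) ℓ) = toepFin d (yp1 ℓ) + toepFin d (yp2 ℓ) := by
        rw [← toep_add]; rfl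
      rw [this]; exact psd_add (hp1 ℓ hℓ).1 (hp2 ℓ hℓ).1
    · have : toepFin d ((ym1 + ym2) ℓ) = toepFin d (ym1 ℓ) + toepFin d (ym2 ℓ) := by
        rw [← toep_add]; rfl
      rw [this]; exact psd_add (hp1 ℓ hℓ).2 (hp2 ℓ hℓ).2
  · rw [← Finset.sum_add_distrib]
    refine Finset.sum_congr rfl fun ℓ _ => ?_
    simp only [Pi.add_apply]
    ring

lemma SS_smul_mem {c : ℝ} {s : ℝ} (hs : s ∈ SS L N d a b w P) :
    |c| * s ∈ SS L N d a b w (c • P) := by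
  obtain ⟨q, hq, yp, ym, hdf, hp, rfl⟩ := hs
  rcases le_or_gt 0 c with hc | hc
  · refine ⟨fun ℓ => c • q ℓ, ?_, fun ℓ => c • yp ℓ, fun ℓ => c • ym ℓ, ?_, ?_, ?_⟩
    · intro ℓ hℓ
      rw [transplant_smul, hq ℓ hℓ, Finset.smul_sum]
      refine Finset.sum_congr rfl fun n _ => ?_
      simp only [Pi.smul_apply, smul_eq_mul, Polynomial.C_mul]
      rw [Polynomial.smul_eq_C_mul, ← mul_assoc]
    · intro ℓ hℓ k
      have e := hdf ℓ hℓ k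
      simp only [Pi.smul_apply, smul_eq_mul]
      have h3 : (∑ n : Fin (N+1), Jent (a ℓ) (b ℓ) w (k:ℕ) (n:ℕ) * (c * q ℓ n))
          = c * ∑ n : Fin (N+1), Jent (a ℓ) (b ℓ) w (k:ℕ) (n:ℕ) * q ℓ n := by
        rw [Finset.mul_sum]; exact Finset.sum_congr rfl fun n _ => by ring
      rw [h3, ← e]; ring
    · intro ℓ hℓ
      constructor
      · rw [toep_smul]; exact psd_smul (hp ℓ hℓ).1 hc
      · rw [toep_smul]; exact psd_smul (hp ℓ hℓ).2 hc
    · rw [abs_of_nonneg hc, Finset.mul_sum]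
      refine Finset.sum_congr rfl fun ℓ _ => ?_
      simp only [Pi.smul_apply, smul_eq_mul]
      ring
  · refine ⟨fun ℓ => c • q ℓ, ?_, fun ℓ => (-c) • ym ℓ, fun ℓ => (-c) • yp ℓ, ?_, ?_, ?_⟩
    · intro ℓ hℓ
      rw [transplant_smul, hq ℓ hℓ, Finset.smul_sum]
      refine Finset.sum_congr rfl fun n _ => ?_
      simp only [Pi.smul_apply, smul_eq_mul, Polynomial.C_mul]
      rw [Polynomial.smul_eq_C_mul, ← mul_assoc]
    · intro ℓ hℓ k
      have e := hdf ℓ hℓ k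
      simp only [Pi.smul_apply, smul_eq_mul]
      have : (∑ n : Fin (N+1), Jent (a ℓ) (b ℓ) w (k:ℕ) (n:ℕ) * (c * q ℓ n))
          = c * ∑ n : Fin (N+1), Jent (a ℓ) (b ℓ) w (k:ℕ) (n:ℕ) * q ℓ n := by
        rw [Finset.mul_sum]; exact Finset.sum_congr rfl fun n _ => by ring
      rw [this, ← e]; ring
    · intro ℓ hℓ
      constructor
      · rw [toep_smul]; exact psd_smul (hp ℓ hℓ).2 (by linarith)
      · rw [toep_smul]; exact psd_smul (hp ℓ hℓ).1 (by linarith)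
    · rw [abs_of_neg hc, Finset.mul_sum]
      refine Finset.sum_congr rfl fun ℓ _ => ?_
      simp only [Pi.smul_apply, smul_eq_mul]
      ring


lemma toep_zero_psd (d : ℕ) : (toepFin d (0 : Fin (d+1) → ℝ)).PosSemidef := by
  have h : (0 : Fin (d+1) → ℝ) = 0 + Pi.single 0 (0:ℝ) := by simp
  rw [h]
  apply toep_tI_psd
  simp

lemma zero_mem_SS_zero {L N d : ℕ} {a b : ℕ → ℝ} {w : ℝ → ℝ} :
    (0:ℝ) ∈ SS L N d a b w 0 := by
  refine ⟨fun _ _ => 0, ?_, fun _ => 0, fun _ => 0, ?_, ?_, ?_⟩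
  · intro ℓ hℓ
    simp [transplant, Polynomial.zero_comp]
  · intro ℓ hℓ k
    simp
  · intro ℓ hℓ
    exact ⟨toep_zero_psd d, toep_zero_psd d⟩
  · simp

end SSfacts


lemma SS_lower {L N d : ℕ} {a b : ℕ → ℝ} {w : ℝ → ℝ} {P : Polynomial ℝ}
    (hL : 0 < L) (hab : ∀ ℓ < L, a ℓ < b ℓ)
    (hw : ContinuousOn w (⋃ ℓ ∈ Finset.range L, Set.Icc (a ℓ) (b ℓ)))
    (hwpos : ∀ x ∈ ⋃ ℓ ∈ Finset.range L, Set.Icc (a ℓ) (b ℓ), 0 < w x)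
    (hd : N ≤ d) (hP : P.natDegree ≤ N) (hPne : P ≠ 0) :
    ∃ δ : ℝ, 0 < δ ∧ ∀ s ∈ SS L N d a b w P, δ ≤ s := by
  set aa := a 0 with haa
  set bb := b 0 with hbb
  have hab0 : aa < bb := hab 0 hL
  set Pt := transplant aa bb P with hPtdef
  have hPt : Pt ≠ 0 := fun h => hPne (transplant_eq_zero aa bb hab0 P h)
  set m : ℝ → ℝ := fun θ => ((bb - aa) * Real.cos θ + aa + bb) / 2 with hm
  set W : ℝ → ℝ := fun θ => w (m θ) with hWdef
  have hmc : Continuous m := by fun_prop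
  have hmK : ∀ θ, m θ ∈ ⋃ ℓ ∈ Finset.range L, Set.Icc (a ℓ) (b ℓ) := by
    intro θ
    have h1 := Real.neg_one_le_cos θ
    have h2 := Real.cos_le_one θ
    refine Set.mem_biUnion (Finset.mem_range.mpr hL) ?_
    constructor
    · rw [hm]; dsimp only; nlinarith
    · rw [hm]; dsimp only; nlinarith
  have hWpos : ∀ θ, 0 < W θ := fun θ => hwpos (m θ) (hmK θ)
  have hWc : ContinuousOn W (Set.uIcc 0 Real.pi) :=
    hw.comp hmc.continuousOn (fun θ _ => hmK θ)
  have hInt : ∀ f : ℝ → ℝ, Continuous f →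
      IntervalIntegrable (fun θ => f θ / W θ) volume 0 Real.pi := by
    intro f hf
    exact (hf.continuousOn.div hWc (fun θ _ => (hWpos θ).ne')).intervalIntegrable
  set F : ℝ → ℝ := fun θ => Real.sin θ * Pt.eval (Real.cos θ) with hFdef
  have hFc : Continuous F := by rw [hFdef]; fun_prop
  obtain ⟨c, hc⟩ := exists_rep (fun k => Polynomial.Chebyshev.T ℝ (k:ℤ))
    (fun k => (T_deg_coeff k).1) (fun k => ne_of_gt (T_deg_coeff k).2) N Pt
    (transplant_natDegree_le _ _ _ hP)
  have hTc : ∀ θ : ℝ, Pt.eval (Real.cos θ) = ∑ k : Fin (N+1), c k * Real.cos ((k:ℕ) * θ) := by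
    intro θ
    conv_lhs => rw [hc]
    rw [Polynomial.eval_finset_sum]
    refine Finset.sum_congr rfl fun k _ => ?_
    rw [Polynomial.eval_mul, Polynomial.eval_C, Polynomial.Chebyshev.T_real_cos]
    push_cast
    ring_nf
  set g : ℝ → ℝ := fun θ => (Pt.eval (Real.cos θ) * F θ) / W θ with hgdef
  set S₀ : ℝ := ∫ θ in (0:ℝ)..Real.pi, g θ with hS₀def
  have hgint : IntervalIntegrable g volume 0 Real.pi := hInt _ (by rw [hFdef]; fun_prop)
  have hgnonneg : ∀ θ ∈ Set.Ioc (0:ℝ) Real.pi, 0 ≤ g θ := by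
    intro θ hθ
    have hs : 0 ≤ Real.sin θ := Real.sin_nonneg_of_nonneg_of_le_pi (le_of_lt hθ.1) hθ.2
    rw [hgdef, hFdef]
    dsimp only
    have h3 : Pt.eval (Real.cos θ) * (Real.sin θ * Pt.eval (Real.cos θ))
        = Real.sin θ * (Pt.eval (Real.cos θ))^2 := by ring
    rw [h3]
    exact div_nonneg (mul_nonneg hs (sq_nonneg _)) (hWpos θ).le
  have hS₀pos : 0 < S₀ := by
    have hIoo : (Set.Ioo (-1:ℝ) 1).Infinite := Set.Ioo_infinite (by norm_num)
    have hroots : {x : ℝ | Pt.IsRoot x}.Finite := Polynomial.finite_setOf_isRoot hPt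
    obtain ⟨x0, hx0⟩ := (hIoo.diff hroots).nonempty
    have hx0I : x0 ∈ Set.Ioo (-1:ℝ) 1 := hx0.1
    have hx0r : Pt.eval x0 ≠ 0 := fun h => hx0.2 h
    set θ0 := Real.arccos x0 with hθ0
    have hcos0 : Real.cos θ0 = x0 := Real.cos_arccos (le_of_lt hx0I.1) (le_of_lt hx0I.2)
    have hθ0pos : 0 < θ0 := Real.arccos_pos.mpr hx0I.2
    have hθ0pi : θ0 < Real.pi := by
      rcases lt_or_eq_of_le (Real.arccos_le_pi x0) with h | h
      · exact h
      · exfalso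
        rw [← hθ0] at h
        rw [h, Real.cos_pi] at hcos0
        have := hx0I.1
        rw [← hcos0] at this
        exact lt_irrefl _ this
    have hgθ0 : 0 < g θ0 := by
      rw [hgdef, hFdef]
      dsimp only
      have h3 : Pt.eval (Real.cos θ0) * (Real.sin θ0 * Pt.eval (Real.cos θ0))
          = Real.sin θ0 * (Pt.eval (Real.cos θ0))^2 := by ring
      rw [h3]
      have h1 : 0 < Real.sin θ0 := Real.sin_pos_of_pos_of_lt_pi hθ0pos hθ0pi
      have h2 : (0:ℝ) < (Pt.eval (Real.cos θ0))^2 := by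
        rw [hcos0]; positivity
      exact div_pos (mul_pos h1 h2) (hWpos θ0)
    have hgcont : ContinuousAt g θ0 := by
      have h1 : ContinuousOn g (Set.uIcc 0 Real.pi) := by
        apply ContinuousOn.div
        · apply Continuous.continuousOn; rw [hFdef]; fun_prop
        · exact hWc
        · exact fun θ _ => (hWpos θ).ne'
      have h2 : Set.uIcc (0:ℝ) Real.pi ∈ nhds θ0 := by
        rw [Set.uIcc_of_le Real.pi_pos.le]
        exact Icc_mem_nhds hθ0pos hθ0pi
      exact h1.continuousAt h2
    have hev : ∀ᶠ x in nhds θ0, 0 < g x := hgcont.eventually (eventually_gt_nhds hgθ0)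
    obtain ⟨ε, hε, hball⟩ := Metric.eventually_nhds_iff.mp hev
    set δ' := min ε (min θ0 (Real.pi - θ0)) / 2 with hδ'
    have hmle1 : min ε (min θ0 (Real.pi - θ0)) ≤ ε := min_le_left _ _
    have hmle2 : min ε (min θ0 (Real.pi - θ0)) ≤ θ0 :=
      le_trans (min_le_right _ _) (min_le_left _ _)
    have hmle3 : min ε (min θ0 (Real.pi - θ0)) ≤ Real.pi - θ0 :=
      le_trans (min_le_right _ _) (min_le_right _ _)
    have hδ'pos : 0 < δ' := by
      apply div_pos _ (by norm_num)
      exact lt_min hε (lt_min hθ0pos (by linarith))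
    have hsub : Set.Ioo (θ0 - δ') (θ0 + δ') ⊆ Function.support g ∩ Set.Ioc 0 Real.pi := by
      intro x hx
      obtain ⟨hx1, hx2⟩ := hx
      constructor
      · apply Function.mem_support.mpr
        apply ne_of_gt
        apply hball
        rw [Real.dist_eq, abs_lt]
        constructor <;> linarith
      · constructor <;> linarith
    rw [hS₀def]
    rw [intervalIntegral.integral_pos_iff_support_of_nonneg_ae' ?hae hgint]
    case hae =>
      rw [Set.uIoc_of_le Real.pi_pos.le]
      refine (ae_restrict_iff' measurableSet_Ioc).mpr ?_
      exact ae_of_all _ hgnonneg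
    refine ⟨Real.pi_pos, ?_⟩
    calc (0:ENNReal) < volume (Set.Ioo (θ0 - δ') (θ0 + δ')) := by
          rw [Real.volume_Ioo]
          apply ENNReal.ofReal_pos.mpr
          linarith
      _ ≤ volume (Function.support g ∩ Set.Ioc 0 Real.pi) := measure_mono hsub
  -- total coefficient mass
  set Cs : ℝ := ∑ k : Fin (N+1), |c k| with hCs
  have hCsnn : 0 ≤ Cs := Finset.sum_nonneg fun _ _ => abs_nonneg _
  -- the lower bound
  have hCs1 : (0:ℝ) < Cs + 1 := by linarith
  refine ⟨((bb - aa) / 2) * (S₀ / (Cs + 1)),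
    mul_pos (by linarith) (div_pos hS₀pos hCs1), ?_⟩
  rintro s ⟨q, hq, yp, ym, hdiff, hpsd, rfl⟩
  -- pointwise expansion of F via the q-coefficients
  have hFq : ∀ θ : ℝ, F θ = ∑ n : Fin (N+1), q 0 n * Real.sin (((n:ℕ) + 1) * θ) := by
    intro θ
    rw [hFdef]
    dsimp only
    rw [hPtdef, haa, hbb, hq 0 hL, Polynomial.eval_finset_sum, Finset.mul_sum]
    refine Finset.sum_congr rfl fun n _ => ?_
    rw [Polynomial.eval_mul, Polynomial.eval_C]
    have h4 : Real.sin θ * (q 0 n * (Polynomial.Chebyshev.U ℝ ((n:ℕ):ℤ)).eval (Real.cos θ))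
        = q 0 n * ((Polynomial.Chebyshev.U ℝ ((n:ℕ):ℤ)).eval (Real.cos θ) * Real.sin θ) := by
      ring
    rw [h4, Polynomial.Chebyshev.U_real_cos]
    norm_cast
  -- the k-th cosine coefficient identity
  have hzk : ∀ kk : Fin (d+1), yp 0 kk - ym 0 kk
      = ∫ θ in (0:ℝ)..Real.pi, (Real.cos ((kk:ℕ) * θ) * F θ) / W θ := by
    intro kk
    rw [hdiff 0 hL kk]
    have hterm : ∀ (n : Fin (N+1)), Jent (a 0) (b 0) w (kk:ℕ) (n:ℕ) * q 0 n
        = ∫ θ in (0:ℝ)..Real.pi,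
            (Real.cos ((kk:ℕ)*θ) * Real.sin (((n:ℕ)+1)*θ) * q 0 n) / W θ := by
      intro n
      have hJ : Jent (a 0) (b 0) w (kk:ℕ) (n:ℕ)
          = ∫ θ in (0:ℝ)..Real.pi,
              (Real.cos ((kk:ℕ)*θ) * Real.sin (((n:ℕ)+1)*θ)) / W θ := rfl
      rw [hJ, ← intervalIntegral.integral_mul_const]
      congr 1
      funext θ
      ring
    rw [Finset.sum_congr rfl (fun n _ => hterm n), ← intervalIntegral.integral_finset_sum]
    · congr 1
      funext θ
      rw [← Finset.sum_div]
      congr 1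
      rw [hFq θ, Finset.mul_sum]
      exact Finset.sum_congr rfl fun n _ => by ring
    · intro n _
      exact hInt _ (by fun_prop)
  -- S₀ as a combination of the constraint values
  set ι : Fin (N+1) → Fin (d+1) := fun k => ⟨(k:ℕ), lt_of_lt_of_le k.isLt (by omega)⟩ with hι
  have hS0sum : S₀ = ∑ k : Fin (N+1), c k * (yp 0 (ι k) - ym 0 (ι k)) := by
    have hstep : ∀ k : Fin (N+1), c k * (yp 0 (ι k) - ym 0 (ι k))
        = ∫ θ in (0:ℝ)..Real.pi, (c k * (Real.cos ((k:ℕ) * θ) * F θ)) / W θ := by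
      intro k
      rw [hzk (ι k)]
      have : ((ι k : Fin (d+1)) : ℕ) = (k:ℕ) := rfl
      rw [this, ← intervalIntegral.integral_const_mul]
      congr 1
      funext θ
      ring
    rw [Finset.sum_congr rfl (fun k _ => hstep k), ← intervalIntegral.integral_finset_sum]
    · rw [hS₀def]
      congr 1
      funext θ
      rw [← Finset.sum_div]
      rw [hgdef]
      dsimp only
      congr 1
      rw [hTc θ, Finset.sum_mul]
      exact Finset.sum_congr rfl fun k _ => by ring
    · intro k _
      refine hInt _ ?_
      exact continuous_const.mul ((Real.continuous_cos.comp
        (continuous_const.mul continuous_id)).mul hFc)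
  -- bounding
  have hpsd0 := hpsd 0 hL
  have hbound : ∀ k : Fin (N+1), |yp 0 (ι k) - ym 0 (ι k)| ≤ yp 0 0 + ym 0 0 := by
    intro k
    obtain ⟨l1, r1⟩ := abs_le.mp (psd_abs hpsd0.1 (ι k))
    obtain ⟨l2, r2⟩ := abs_le.mp (psd_abs hpsd0.2 (ι k))
    rw [abs_le]
    constructor <;> linarith
  have h00 : 0 ≤ yp 0 0 + ym 0 0 := by
    have := psd_y0 hpsd0.1
    have := psd_y0 hpsd0.2
    linarith
  have hS0le : S₀ ≤ Cs * (yp 0 0 + ym 0 0) := by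
    rw [hS0sum, hCs, Finset.sum_mul]
    refine Finset.sum_le_sum fun k _ => ?_
    calc c k * (yp 0 (ι k) - ym 0 (ι k)) ≤ |c k * (yp 0 (ι k) - ym 0 (ι k))| := le_abs_self _
      _ = |c k| * |yp 0 (ι k) - ym 0 (ι k)| := abs_mul _ _
      _ ≤ |c k| * (yp 0 0 + ym 0 0) := mul_le_mul_of_nonneg_left (hbound k) (abs_nonneg _)
  have hy : S₀ / (Cs + 1) ≤ yp 0 0 + ym 0 0 := by
    rw [div_le_iff₀ (by positivity)]
    nlinarith
  have hterm0 : ((b 0 - a 0)/2) * (yp 0 0 + ym 0 0)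
      ≤ ∑ ℓ ∈ Finset.range L, ((b ℓ - a ℓ) / 2) * (yp ℓ 0 + ym ℓ 0) := by
    refine Finset.single_le_sum (f := fun ℓ => ((b ℓ - a ℓ) / 2) * (yp ℓ 0 + ym ℓ 0))
      (fun ℓ hℓ => ?_) (Finset.mem_range.mpr hL)
    rw [Finset.mem_range] at hℓ
    have h1 := psd_y0 (hpsd ℓ hℓ).1
    have h2 := psd_y0 (hpsd ℓ hℓ).2
    have := hab ℓ hℓ
    apply mul_nonneg <;> linarith
  have hmul : ((bb - aa)/2) * (S₀/(Cs+1)) ≤ ((b 0 - a 0)/2) * (yp 0 0 + ym 0 0) := by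
    rw [← haa, ← hbb]
    exact mul_le_mul_of_nonneg_left hy (by linarith)
  linarith

/-- For `d ≥ N`, the ersatz functional `⫽·⫽_d` is a norm on the space of polynomials of
degree at most `N`: it is nonnegative, absolutely homogeneous, satisfies the triangle
inequality, and vanishes only at `0`. -/
theorem ersatz_is_norm
    (L : ℕ) (hL : 0 < L) (a b : ℕ → ℝ)
    (ha0 : a 0 = -1) (hbL : b (L - 1) = 1)
    (hab : ∀ ℓ < L, a ℓ < b ℓ)
    (hgap : ∀ ℓ, ℓ + 1 < L → b ℓ < a (ℓ + 1))
    (w : ℝ → ℝ)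
    (hw : ContinuousOn w (⋃ ℓ ∈ Finset.range L, Set.Icc (a ℓ) (b ℓ)))
    (hwpos : ∀ x ∈ ⋃ ℓ ∈ Finset.range L, Set.Icc (a ℓ) (b ℓ), 0 < w x)
    (N d : ℕ) (hd : N ≤ d) :
    (∀ P : Polynomial ℝ, P.natDegree ≤ N → 0 ≤ ersatz L N d a b w P) ∧
    (∀ (c : ℝ) (P : Polynomial ℝ), P.natDegree ≤ N →
      ersatz L N d a b w (c • P) = |c| * ersatz L N d a b w P) ∧
    (∀ P Q : Polynomial ℝ, P.natDegree ≤ N → Q.natDegree ≤ N →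
      ersatz L N d a b w (P + Q) ≤ ersatz L N d a b w P + ersatz L N d a b w Q) ∧
    (∀ P : Polynomial ℝ, P.natDegree ≤ N → ersatz L N d a b w P = 0 → P = 0) := by
  refine ⟨?_, ?_, ?_, ?_⟩
  · intro P hP
    rw [ersatz_eq_sInf]
    exact le_csInf (SS_nonempty hP) (SS_nonneg hab)
  · intro c P hP
    rcases eq_or_ne c 0 with rfl | hc
    · rw [zero_smul]
      simp only [abs_zero, zero_mul]
      rw [ersatz_eq_sInf]
      exact le_antisymm (csInf_le (SS_bddBelow hab) zero_mem_SS_zero)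
        (le_csInf ⟨0, zero_mem_SS_zero⟩ (SS_nonneg hab))
    · have hset : SS L N d a b w (c • P) = |c| • SS L N d a b w P := by
        apply Set.Subset.antisymm
        · intro x hx
          have h1 := SS_smul_mem (c := c⁻¹) hx
          have h2 : (c⁻¹ • c • P) = P := by rw [smul_smul, inv_mul_cancel₀ hc, one_smul]
          rw [h2] at h1
          refine Set.mem_smul_set.mpr ⟨|c⁻¹| * x, h1, ?_⟩
          rw [smul_eq_mul, ← mul_assoc, abs_inv, mul_inv_cancel₀ (by positivity : |c| ≠ 0), one_mul]
        · intro x hx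
          obtain ⟨s, hs, rfl⟩ := Set.mem_smul_set.mp hx
          rw [smul_eq_mul]
          exact SS_smul_mem hs
      rw [ersatz_eq_sInf, ersatz_eq_sInf, hset, Real.sInf_smul_of_nonneg (abs_nonneg c)]
      simp
  · intro P Q hP hQ
    rw [ersatz_eq_sInf, ersatz_eq_sInf, ersatz_eq_sInf]
    have key : ∀ s ∈ SS L N d a b w P, ∀ t ∈ SS L N d a b w Q,
        sInf (SS L N d a b w (P + Q)) ≤ s + t := fun s hs t ht =>
      csInf_le (SS_bddBelow hab) (SS_add_mem hs ht)
    have h1 : ∀ s ∈ SS L N d a b w P,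
        sInf (SS L N d a b w (P + Q)) - s ≤ sInf (SS L N d a b w Q) := fun s hs =>
      le_csInf (SS_nonempty hQ) (fun t ht => by linarith [key s hs t ht])
    have h2 : sInf (SS L N d a b w (P + Q)) - sInf (SS L N d a b w Q)
        ≤ sInf (SS L N d a b w P) :=
      le_csInf (SS_nonempty hP) (fun s hs => by linarith [h1 s hs])
    linarith
  · intro P hP h0
    by_contra hPne
    obtain ⟨δ, hδ, hlow⟩ := SS_lower hL hab hw hwpos hd hP hPne
    have hle : δ ≤ ersatz L N d a b w P := by
      rw [ersatz_eq_sInf]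
      exact le_csInf (SS_nonempty hP) hlow
    rw [h0] at hle
    linarith
end

section
/- Let K = ⋃_{ℓ=1}^L [a_ℓ, b_ℓ] ⊆ [−1,1] with −1 = a_1 < b_1 < a_2 < ⋯ < a_L < b_L = 1, let w be continuous and strictly positive on K, let N ≥ 1, and let U be a monic polynomial of degree N such that ∫_K sgn(U(x))·P(x)/w(x) dx = 0 for every polynomial P of degree strictly less than N. Then U has N distinct real roots, all lying in the open interval (−1, 1); in particular all roots of U are simple. -/
open MeasureTheory Filter Polynomial

section helpers

lemma abs_real_sign_le_one (t : ℝ) : |Real.sign t| ≤ 1 := by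
  rcases Real.sign_apply_eq t with h | h | h <;> rw [h] <;> norm_num

lemma measurable_real_sign : Measurable Real.sign := by
  have : Real.sign = fun t : ℝ => if t < 0 then (-1:ℝ) else if 0 < t then 1 else 0 := rfl
  rw [this]
  exact Measurable.ite (measurableSet_lt measurable_id measurable_const) measurable_const
    (Measurable.ite (measurableSet_lt measurable_const measurable_id) measurable_const
      measurable_const)

lemma noSignChange_aux : ∀ (n : ℕ) (c d : ℝ) (W : Polynomial ℝ), W.natDegree ≤ n → W ≠ 0 →
    (∀ x ∈ Set.Ioo c d, Even (W.rootMultiplicity x)) →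
    ∀ x ∈ Set.Ioo c d, ∀ y ∈ Set.Ioo c d, x < y → 0 ≤ W.eval x * W.eval y := by
  intro n
  induction n with
  | zero =>
    intro c d W hdeg _ _ x _ y _ _
    obtain ⟨k, rfl⟩ : ∃ k, W = Polynomial.C k := ⟨W.coeff 0, Polynomial.eq_C_of_natDegree_le_zero hdeg⟩
    simp [mul_self_nonneg]
  | succ n ih =>
    intro c d W hdeg hW0 heven x hx y hy hxy
    by_contra hneg
    push_neg at hneg
    have hcont : ContinuousOn (fun t => W.eval t) (Set.Icc x y) := (W.continuous_aeval).continuousOn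
    have hr : ∃ r ∈ Set.Ioo x y, W.eval r = 0 := by
      rcases mul_neg_iff.mp hneg with ⟨hxpos, hyneg⟩ | ⟨hxneg, hypos⟩
      · obtain ⟨r, hr, hr0⟩ := intermediate_value_Ioo' hxy.le hcont (a := x) (b := y)
          (Set.mem_Ioo.mpr ⟨hyneg, hxpos⟩)
        exact ⟨r, hr, hr0⟩
      · obtain ⟨r, hr, hr0⟩ := intermediate_value_Ioo hxy.le hcont (a := x) (b := y)
          (Set.mem_Ioo.mpr ⟨hxneg, hypos⟩)
        exact ⟨r, hr, hr0⟩
    obtain ⟨r, hrxy, hr0⟩ := hr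
    have hrcd : r ∈ Set.Ioo c d := ⟨hx.1.trans hrxy.1, hrxy.2.trans hy.2⟩
    set m := W.rootMultiplicity r with hm
    have hmeven : Even m := heven r hrcd
    have hmpos : 0 < m := (Polynomial.rootMultiplicity_pos hW0).mpr hr0
    set Q := W /ₘ (X - Polynomial.C r) ^ m with hQ
    have hfact : (X - Polynomial.C r) ^ m * Q = W :=
      Polynomial.pow_mul_divByMonic_rootMultiplicity_eq W r
    have hQ0 : Q ≠ 0 := by
      intro h; rw [h, mul_zero] at hfact; exact hW0 hfact.symm
    have hpow0 : (X - Polynomial.C r) ^ m ≠ 0 := pow_ne_zero _ (Polynomial.X_sub_C_ne_zero r)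
    have hdegQ : Q.natDegree ≤ n := by
      have := Polynomial.natDegree_mul hpow0 hQ0
      rw [hfact] at this
      have hdp : ((X - Polynomial.C r) ^ m).natDegree = m := by
        simp [Polynomial.natDegree_pow]
      omega
    have hQeven : ∀ s ∈ Set.Ioo c d, Even (Q.rootMultiplicity s) := by
      intro s hs
      have hmul : W.rootMultiplicity s =
          ((X - Polynomial.C r) ^ m).rootMultiplicity s + Q.rootMultiplicity s := by
        conv_lhs => rw [← hfact]
        exact Polynomial.rootMultiplicity_mul (hfact.symm ▸ hW0)
      have hpowmult : Even (((X - Polynomial.C r) ^ m).rootMultiplicity s) := by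
        by_cases hsr : s = r
        · subst hsr; rw [Polynomial.rootMultiplicity_X_sub_C_pow]; exact hmeven
        · rw [Polynomial.rootMultiplicity_eq_zero]
          · exact Even.zero
          · simp only [Polynomial.IsRoot, Polynomial.eval_pow, Polynomial.eval_sub,
              Polynomial.eval_X, Polynomial.eval_C]
            exact fun h => hsr (by nlinarith [pow_eq_zero_iff (n := m) (by omega) |>.mp h])
      have := heven s hs
      rw [hmul, Nat.even_add] at this
      exact this.mp hpowmult
    have hxr : (x - r) ^ m > 0 := hmeven.pow_pos (by intro h; nlinarith [hrxy.1, sub_eq_zero.mp h])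
    have hyr : (y - r) ^ m > 0 := hmeven.pow_pos (by intro h; nlinarith [hrxy.2, sub_eq_zero.mp h])
    have hWx : W.eval x = (x - r) ^ m * Q.eval x := by
      conv_lhs => rw [← hfact]; simp
    have hWy : W.eval y = (y - r) ^ m * Q.eval y := by
      conv_lhs => rw [← hfact]; simp
    have hQneg : Q.eval x * Q.eval y < 0 := by
      rw [hWx, hWy] at hneg
      by_contra h
      push_neg at h
      nlinarith [mul_pos hxr hyr, h, hneg]
    exact absurd (ih c d Q hdegQ hQ0 hQeven x hx y hy hxy) (not_le.mpr hQneg)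

lemma noSignChange (c d : ℝ) (W : Polynomial ℝ) (hW0 : W ≠ 0)
    (heven : ∀ x ∈ Set.Ioo c d, Even (W.rootMultiplicity x)) :
    (∀ x ∈ Set.Ioo c d, 0 ≤ W.eval x) ∨ (∀ x ∈ Set.Ioo c d, W.eval x ≤ 0) := by
  have key : ∀ x ∈ Set.Ioo c d, ∀ y ∈ Set.Ioo c d, 0 ≤ W.eval x * W.eval y := by
    intro x hx y hy
    rcases lt_trichotomy x y with h | h | h
    · exact noSignChange_aux W.natDegree c d W le_rfl hW0 heven x hx y hy h
    · subst h; exact mul_self_nonneg _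
    · have := noSignChange_aux W.natDegree c d W le_rfl hW0 heven y hy x hx h
      linarith [this, mul_comm (W.eval x) (W.eval y)]
  by_cases hex : ∃ x₀ ∈ Set.Ioo c d, 0 < W.eval x₀
  · obtain ⟨x₀, hx₀, hpos⟩ := hex
    left; intro y hy
    nlinarith [key x₀ hx₀ y hy]
  · push_neg at hex
    right; exact hex

end helpers

/-- If a monic polynomial `U` of degree `N` satisfies the sign-orthogonality condition
`∫_K sgn(U(x)) P(x) / w(x) dx = 0` for all polynomials `P` of degree `< N`, then `U` has
`N` distinct real roots, all lying in `(-1, 1)`; in particular all roots are simple. -/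
theorem orthogonality_implies_simple_roots
    (L : ℕ) (hL : 0 < L) (a b : ℕ → ℝ)
    (ha0 : a 0 = -1) (hbL : b (L - 1) = 1)
    (hab : ∀ ℓ < L, a ℓ < b ℓ)
    (hgap : ∀ ℓ, ℓ + 1 < L → b ℓ < a (ℓ + 1))
    (w : ℝ → ℝ)
    (hw : ContinuousOn w (⋃ ℓ ∈ Finset.range L, Set.Icc (a ℓ) (b ℓ)))
    (hwpos : ∀ x ∈ ⋃ ℓ ∈ Finset.range L, Set.Icc (a ℓ) (b ℓ), 0 < w x)
    (N : ℕ) (hN : 1 ≤ N)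
    (U : Polynomial ℝ) (hUmonic : U.Monic) (hUdeg : U.natDegree = N)
    (hortho : ∀ P : Polynomial ℝ, P.degree < (N : WithBot ℕ) →
      ∑ ℓ ∈ Finset.range L,
        (∫ x in (a ℓ)..(b ℓ), Real.sign (U.eval x) * P.eval x / w x) = 0) :
    ∃ ξ : Fin N → ℝ, StrictMono ξ ∧ (∀ i, ξ i ∈ Set.Ioo (-1 : ℝ) 1) ∧
      U = ∏ i : Fin N, (Polynomial.X - Polynomial.C (ξ i)) := by
  -- proof
  classical
  have hU0 : U ≠ 0 := hUmonic.ne_zero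
  -- bounds on the intervals
  have haGe : ∀ ℓ < L, (-1:ℝ) ≤ a ℓ := by
    intro ℓ
    induction ℓ with
    | zero => intro _; rw [ha0]
    | succ k ihk =>
      intro hk
      have h1 : k < L := by omega
      have := ihk h1
      have := hab k h1
      have := hgap k hk
      linarith
  have hbchain : ∀ k : ℕ, ∀ ℓ : ℕ, ℓ + k < L → b ℓ ≤ b (ℓ + k) := by
    intro k
    induction k with
    | zero => intro ℓ _; simp
    | succ k ihk =>
      intro ℓ h
      have h1 : ℓ + k < L := by omega
      have h2 : (ℓ + k) + 1 < L := by omega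
      have := ihk ℓ h1
      have := hgap (ℓ + k) h2
      have := hab ((ℓ + k) + 1) (by omega)
      have heq : ℓ + (k+1) = (ℓ + k) + 1 := by omega
      rw [heq]
      linarith
  have hbLe : ∀ ℓ < L, b ℓ ≤ 1 := by
    intro ℓ hℓ
    have h : ℓ + (L - 1 - ℓ) = L - 1 := by omega
    have := hbchain (L - 1 - ℓ) ℓ (by omega)
    rw [h, hbL] at this
    exact this
  have hmemK : ∀ ℓ < L, ∀ x ∈ Set.Icc (a ℓ) (b ℓ),
      x ∈ ⋃ ℓ ∈ Finset.range L, Set.Icc (a ℓ) (b ℓ) := by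
    intro ℓ hℓ x hx
    exact Set.mem_biUnion (Finset.mem_range.mpr hℓ) hx
  -- the set of odd-multiplicity roots in (-1,1)
  set T : Finset ℝ :=
    U.roots.toFinset.filter (fun r => r ∈ Set.Ioo (-1:ℝ) 1 ∧ Odd (U.rootMultiplicity r)) with hT
  set P : Polynomial ℝ := ∏ r ∈ T, (X - Polynomial.C r) with hPdef
  have hPmonic : P.Monic := monic_prod_of_monic _ _ (fun r _ => monic_X_sub_C r)
  have hP0 : P ≠ 0 := hPmonic.ne_zero
  have hPdeg : P.natDegree = T.card := by
    rw [hPdef, Polynomial.natDegree_prod _ _ (fun r _ => Polynomial.X_sub_C_ne_zero r)]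
    simp
  set W : Polynomial ℝ := U * P with hWdef
  have hW0 : W ≠ 0 := mul_ne_zero hU0 hP0
  have hProots : P.roots = T.val := Polynomial.roots_prod_X_sub_C T
  have hrmP : ∀ x : ℝ, P.rootMultiplicity x = if x ∈ T then 1 else 0 := by
    intro x
    rw [← Polynomial.count_roots, hProots]
    by_cases hx : x ∈ T
    · rw [if_pos hx]
      exact Multiset.count_eq_one_of_mem T.nodup hx
    · rw [if_neg hx, Multiset.count_eq_zero]
      exact fun h => hx h
  have hWeven : ∀ x ∈ Set.Ioo (-1:ℝ) 1, Even (W.rootMultiplicity x) := by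
    intro x hx
    rw [hWdef, Polynomial.rootMultiplicity_mul (hWdef ▸ hW0), hrmP]
    by_cases hodd : Odd (U.rootMultiplicity x)
    · have hroot : U.IsRoot x := by
        have : 0 < U.rootMultiplicity x := by
          rcases hodd with ⟨k, hk⟩; omega
        exact (Polynomial.rootMultiplicity_pos hU0).mp this
      have hxT : x ∈ T := by
        rw [hT, Finset.mem_filter, Multiset.mem_toFinset]
        exact ⟨(Polynomial.mem_roots hU0).mpr hroot, hx, hodd⟩
      rw [if_pos hxT]
      exact hodd.add_one
    · have hxT : x ∉ T := by
        rw [hT, Finset.mem_filter]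
        rintro ⟨-, -, h⟩; exact hodd h
      rw [if_neg hxT, add_zero]
      exact Nat.not_odd_iff_even.mp hodd
  -- a global sign ε
  obtain ⟨ε, hε, hεW⟩ : ∃ ε : ℝ, (ε = 1 ∨ ε = -1) ∧
      ∀ x ∈ Set.Ioo (-1:ℝ) 1, 0 ≤ ε * W.eval x := by
    rcases noSignChange (-1) 1 W hW0 hWeven with h | h
    · exact ⟨1, Or.inl rfl, fun x hx => by simpa using h x hx⟩
    · exact ⟨-1, Or.inr rfl, fun x hx => by
        have := h x hx; nlinarith⟩
  have hεne : ε ≠ 0 := by rcases hε with rfl | rfl <;> norm_num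
  have hεabs : |ε| = 1 := by rcases hε with rfl | rfl <;> norm_num
  -- pointwise nonnegativity of ε * sign(U) * P / w at points of (-1,1) with positive weight
  have hfnn : ∀ x ∈ Set.Ioo (-1:ℝ) 1, 0 < w x →
      0 ≤ ε * (Real.sign (U.eval x) * P.eval x / w x) := by
    intro x hx hwx
    have hWev : W.eval x = U.eval x * P.eval x := by rw [hWdef, Polynomial.eval_mul]
    have h1 : 0 ≤ ε * (U.eval x * P.eval x) := hWev ▸ hεW x hx
    rcases lt_trichotomy (U.eval x) 0 with hU | hU | hU
    · rw [Real.sign_of_neg hU]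
      have h2 : ε * (-1 * P.eval x / w x) = (-(ε * P.eval x)) / w x := by ring
      rw [h2]
      apply div_nonneg _ hwx.le
      nlinarith
    · rw [hU, Real.sign_zero]
      simp
    · rw [Real.sign_of_pos hU]
      have h2 : ε * (1 * P.eval x / w x) = (ε * P.eval x) / w x := by ring
      rw [h2]
      apply div_nonneg _ hwx.le
      nlinarith
  -- main claim: T.card ≥ N
  have hTcard : N ≤ T.card := by
    by_contra hlt
    push_neg at hlt
    have hPdeg' : P.degree < (N : WithBot ℕ) := by
      rw [Polynomial.degree_eq_natDegree hP0, hPdeg]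
      exact_mod_cast hlt
    have h0 := hortho P hPdeg'
    -- a.e. nonnegativity on each Ioc
    have hne1 : ∀ᵐ x : ℝ, x ≠ (1:ℝ) := by
      rw [MeasureTheory.ae_iff]
      have : {x : ℝ | ¬ x ≠ 1} = {1} := by ext t; simp
      rw [this]
      exact Real.volume_singleton
    have haeℓ : ∀ ℓ < L, (0:ℝ → ℝ) ≤ᵐ[volume.restrict (Set.Ioc (a ℓ) (b ℓ))]
        fun x => ε * (Real.sign (U.eval x) * P.eval x / w x) := by
      intro ℓ hℓ
      have hmem := ae_restrict_mem (μ := volume) (measurableSet_Ioc (a := a ℓ) (b := b ℓ))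
      filter_upwards [hmem, hne1.filter_mono (MeasureTheory.ae_mono Measure.restrict_le_self)]
        with x hxmem hx1
      have hxIoo : x ∈ Set.Ioo (-1:ℝ) 1 := by
        constructor
        · exact lt_of_le_of_lt (haGe ℓ hℓ) hxmem.1
        · exact lt_of_le_of_ne (hxmem.2.trans (hbLe ℓ hℓ)) hx1
      exact hfnn x hxIoo (hwpos x (hmemK ℓ hℓ x ⟨hxmem.1.le, hxmem.2⟩))
    have hnnℓ : ∀ ℓ ∈ Finset.range L,
        0 ≤ ∫ x in (a ℓ)..(b ℓ), ε * (Real.sign (U.eval x) * P.eval x / w x) := by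
      intro ℓ hℓ
      rw [Finset.mem_range] at hℓ
      rw [intervalIntegral.integral_of_le (hab ℓ hℓ).le]
      exact MeasureTheory.integral_nonneg_of_ae (haeℓ ℓ hℓ)
    -- integrability on the first interval
    have h0L : 0 < L := hL
    have hIccK : Set.Icc (a 0) (b 0) ⊆ ⋃ ℓ ∈ Finset.range L, Set.Icc (a ℓ) (b ℓ) :=
      fun x hx => hmemK 0 h0L x hx
    have hwc : ContinuousOn w (Set.Icc (a 0) (b 0)) := hw.mono hIccK
    have hab0 : a 0 < b 0 := hab 0 h0L
    have hIccne : (Set.Icc (a 0) (b 0)).Nonempty := Set.nonempty_Icc.mpr hab0.le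
    obtain ⟨x₀, hx₀mem, hx₀min⟩ :=
      (isCompact_Icc (a := a 0) (b := b 0)).exists_isMinOn hIccne hwc
    set c : ℝ := w x₀ with hc
    have hcpos : 0 < c := hwpos x₀ (hIccK hx₀mem)
    have hcle : ∀ x ∈ Set.Icc (a 0) (b 0), c ≤ w x := fun x hx => hx₀min hx
    obtain ⟨M, hM⟩ := (isCompact_Icc (a := a 0) (b := b 0)).exists_bound_of_continuousOn
      ((P.continuous_aeval).continuousOn : ContinuousOn (fun t => P.eval t) _)
    have hM0 : 0 ≤ M := le_trans (norm_nonneg _) (hM (a 0) (Set.left_mem_Icc.mpr hab0.le))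
    have hmeas : AEStronglyMeasurable (fun x => ε * (Real.sign (U.eval x) * P.eval x / w x))
        (volume.restrict (Set.Ioc (a 0) (b 0))) := by
      have hsgn : Measurable fun x => Real.sign (U.eval x) :=
        measurable_real_sign.comp (U.continuous_aeval).measurable
      have hPev : Measurable fun x => P.eval x := (P.continuous_aeval).measurable
      have hwm : AEMeasurable w (volume.restrict (Set.Ioc (a 0) (b 0))) := by
        have h1 : AEMeasurable w (volume.restrict (Set.Icc (a 0) (b 0))) :=
          hwc.aemeasurable measurableSet_Icc
        exact h1.mono_measure (Measure.restrict_mono Set.Ioc_subset_Icc_self le_rfl)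
      exact (((hsgn.aemeasurable.mul hPev.aemeasurable).div hwm).const_mul ε).aestronglyMeasurable
    have hint : IntegrableOn (fun x => ε * (Real.sign (U.eval x) * P.eval x / w x))
        (Set.Ioc (a 0) (b 0)) volume := by
      apply MeasureTheory.Integrable.mono'
        (integrable_const (|ε| * M / c)) hmeas
      rw [MeasureTheory.ae_restrict_iff' measurableSet_Ioc]
      apply Filter.Eventually.of_forall
      intro x hx
      have hxIcc : x ∈ Set.Icc (a 0) (b 0) := ⟨hx.1.le, hx.2⟩
      have hwx : 0 < w x := hwpos x (hIccK hxIcc)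
      have hwxc : c ≤ |w x| := by rw [abs_of_pos hwx]; exact hcle x hxIcc
      have hPx : |P.eval x| ≤ M := hM x hxIcc
      have hsx : |Real.sign (U.eval x)| ≤ 1 := abs_real_sign_le_one _
      have habs : ‖ε * (Real.sign (U.eval x) * P.eval x / w x)‖ =
          |ε| * (|Real.sign (U.eval x)| * |P.eval x| / |w x|) := by
        rw [Real.norm_eq_abs, abs_mul, abs_div, abs_mul]
      rw [habs, hεabs, one_mul, one_mul]
      calc |Real.sign (U.eval x)| * |P.eval x| / |w x| ≤ 1 * M / c := by
            refine div_le_div₀ (by linarith) ?_ hcpos hwxc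
            exact mul_le_mul hsx hPx (abs_nonneg _) zero_le_one
        _ = M / c := by ring
    -- positivity of the first integral
    have haepos : (0:ℝ → ℝ) ≤ᵐ[volume.restrict (Set.Ioc (a 0) (b 0))]
        fun x => ε * (Real.sign (U.eval x) * P.eval x / w x) := haeℓ 0 h0L
    have hsupp : Set.Ioc (a 0) (b 0) \ ((W.roots.toFinset : Set ℝ) ∪ {1}) ⊆
        (Function.support fun x => ε * (Real.sign (U.eval x) * P.eval x / w x)) ∩
          Set.Ioc (a 0) (b 0) := by
      rintro x ⟨hx, hxE⟩
      refine ⟨?_, hx⟩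
      simp only [Set.mem_union, Set.mem_singleton_iff, Multiset.mem_toFinset,
        Finset.coe_insert, not_or, Finset.mem_coe] at hxE
      obtain ⟨hxW, hx1⟩ := hxE
      have hWx : W.eval x ≠ 0 := by
        intro h
        exact hxW ((Polynomial.mem_roots hW0).mpr h)
      have hUx : U.eval x ≠ 0 := fun h => hWx (by rw [hWdef, Polynomial.eval_mul, h, zero_mul])
      have hPx : P.eval x ≠ 0 := fun h => hWx (by rw [hWdef, Polynomial.eval_mul, h, mul_zero])
      have hwx : 0 < w x := hwpos x (hIccK ⟨hx.1.le, hx.2⟩)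
      have hsx : Real.sign (U.eval x) ≠ 0 := fun h => hUx (Real.sign_eq_zero_iff.mp h)
      simp only [Function.mem_support]
      intro h
      have := mul_eq_zero.mp h
      rcases this with h | h
      · exact hεne h
      · rcases mul_eq_zero.mp (div_eq_zero_iff.mp h |>.resolve_right hwx.ne') with h | h
        · exact hsx h
        · exact hPx h
    have hmeaspos : 0 < volume ((Function.support fun x =>
        ε * (Real.sign (U.eval x) * P.eval x / w x)) ∩ Set.Ioc (a 0) (b 0)) := by
      have hnull : volume ((W.roots.toFinset : Set ℝ) ∪ {1}) = 0 := by
        apply measure_union_null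
        · exact (W.roots.toFinset.finite_toSet).measure_zero volume
        · exact Real.volume_singleton
      have h1 : volume (Set.Ioc (a 0) (b 0) \ ((W.roots.toFinset : Set ℝ) ∪ {1})) =
          volume (Set.Ioc (a 0) (b 0)) := measure_diff_null hnull
      have h2 : (0:ENNReal) < volume (Set.Ioc (a 0) (b 0)) := by
        rw [Real.volume_Ioc]
        simp [ENNReal.ofReal_pos, hab0]
      calc (0:ENNReal) < volume (Set.Ioc (a 0) (b 0)) := h2
        _ = volume (Set.Ioc (a 0) (b 0) \ ((W.roots.toFinset : Set ℝ) ∪ {1})) := h1.symm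
        _ ≤ _ := measure_mono hsupp
    have hpos0 : 0 < ∫ x in (a 0)..(b 0), ε * (Real.sign (U.eval x) * P.eval x / w x) := by
      rw [intervalIntegral.integral_of_le hab0.le]
      exact (MeasureTheory.setIntegral_pos_iff_support_of_nonneg_ae haepos hint).mpr hmeaspos
    -- combine with orthogonality
    have hsum : ∑ ℓ ∈ Finset.range L,
        (∫ x in (a ℓ)..(b ℓ), ε * (Real.sign (U.eval x) * P.eval x / w x)) = 0 := by
      have : ∀ ℓ ∈ Finset.range L,
          (∫ x in (a ℓ)..(b ℓ), ε * (Real.sign (U.eval x) * P.eval x / w x)) =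
          ε * ∫ x in (a ℓ)..(b ℓ), Real.sign (U.eval x) * P.eval x / w x := by
        intro ℓ _
        exact intervalIntegral.integral_const_mul ε _
      rw [Finset.sum_congr rfl this, ← Finset.mul_sum, h0, mul_zero]
    have hsingle : (∫ x in (a 0)..(b 0), ε * (Real.sign (U.eval x) * P.eval x / w x)) ≤
        ∑ ℓ ∈ Finset.range L,
          (∫ x in (a ℓ)..(b ℓ), ε * (Real.sign (U.eval x) * P.eval x / w x)) :=
      Finset.single_le_sum hnnℓ (Finset.mem_range.mpr h0L)
    linarith
  -- conclude: T.card = N and U = P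
  have hle1 : T.card ≤ U.roots.toFinset.card := Finset.card_le_card (Finset.filter_subset _ _)
  have hle2 : U.roots.toFinset.card ≤ Multiset.card U.roots := U.roots.toFinset_card_le
  have hle3 : Multiset.card U.roots ≤ N := hUdeg ▸ U.card_roots'
  have hcardT : T.card = N := le_antisymm (le_trans hle1 (le_trans hle2 hle3)) hTcard
  have hcardroots : Multiset.card U.roots = N := by omega
  have hnodup : U.roots.Nodup := by
    have : U.roots.toFinset.card = Multiset.card U.roots := by omega
    exact Multiset.toFinset_card_eq_card_iff_nodup.mp this
  have hTeq : T = U.roots.toFinset := by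
    apply Finset.eq_of_subset_of_card_le (Finset.filter_subset _ _)
    show U.roots.toFinset.card ≤ T.card
    omega
  have hsplits : U.Splits := by
    rw [Polynomial.splits_iff_card_roots, hUdeg]
    exact hcardroots
  have hUfact : U = (U.roots.map fun r => X - Polynomial.C r).prod :=
    hsplits.eq_prod_roots_of_monic hUmonic
  have hrootsval : U.roots.toFinset.val = U.roots := Multiset.Nodup.dedup hnodup
  have hUP : U = P := by
    rw [hUfact, hPdef, hTeq, Finset.prod_eq_multiset_prod, hrootsval]
  -- build ξ
  set e := T.orderIsoOfFin hcardT with he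
  refine ⟨fun i => (e i : ℝ), ?_, ?_, ?_⟩
  · intro i j hij
    exact e.strictMono hij
  · intro i
    have hmem : (e i : ℝ) ∈ T := (e i).2
    exact (Finset.mem_filter.mp hmem).2.1
  · rw [hUP, hPdef]
    rw [← Finset.prod_coe_sort T (fun r => X - Polynomial.C r)]
    exact (Equiv.prod_comp e.toEquiv (fun x : T => X - Polynomial.C (x : ℝ))).symm
end

section
/- Let K = ⋃_{ℓ=1}^L [a_ℓ, b_ℓ] ⊆ [−1,1] with −1 = a_1 < b_1 < a_2 < ⋯ < a_L < b_L = 1. For each N ≥ 1 let t_N := min{ ‖P‖_K : P monic of degree N } and s_N := min{ ‖P‖_{L2(K)} : P monic of degree N }. Then s_N^{1/N} / t_N^{1/N} → 1 as N → ∞; in particular, if t_N^{1/N} converges to a limit c, then s_N^{1/N} also converges to c. -/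
open MeasureTheory Filter Polynomial

/-- The sup norm `‖P‖_K = max_{x ∈ K} |P(x)|` on `K = ⋃_{ℓ<L} [a ℓ, b ℓ]`. -/
noncomputable def supK (L : ℕ) (a b : ℕ → ℝ) (P : Polynomial ℝ) : ℝ :=
  sSup ((fun x => |P.eval x|) '' ⋃ ℓ ∈ Finset.range L, Set.Icc (a ℓ) (b ℓ))

/-- The `L2` norm `‖P‖_{L2(K)} = (∑_ℓ ∫_{a_ℓ}^{b_ℓ} P(t)² dt)^{1/2}`. -/
noncomputable def L2K (L : ℕ) (a b : ℕ → ℝ) (P : Polynomial ℝ) : ℝ :=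
  Real.sqrt (∑ ℓ ∈ Finset.range L, ∫ t in (a ℓ)..(b ℓ), (P.eval t) ^ 2)

open Polynomial.Chebyshev Real Set Finset intervalIntegral

lemma U_deg_coeff_s15 : ∀ k : ℕ, ((U ℝ (k:ℤ)).natDegree = k ∧ (U ℝ (k:ℤ)).coeff k = 2^k)
  | 0 => by simp [U_zero]
  | 1 => by
      refine ⟨by simp [U_one], ?_⟩
      simp [U_one, coeff_X, mul_comm]
  | (k+2) => by
      obtain ⟨hd1, hc1⟩ := U_deg_coeff_s15 (k+1)
      obtain ⟨hd0, hc0⟩ := U_deg_coeff_s15 k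
      have hC2 : (2:ℝ[X]) = C 2 := (map_ofNat Polynomial.C 2).symm
      have hcast1 : ((k+1:ℕ):ℤ) = (k:ℤ)+1 := by push_cast; ring
      rw [hcast1] at hd1 hc1
      have h2 : (U ℝ (((k+2:ℕ)):ℤ)) = 2*X*U ℝ ((k:ℤ)+1) - U ℝ (k:ℤ) := by
        have := U_add_two ℝ k; rw [show ((k+2:ℕ):ℤ) = (k:ℤ)+2 by push_cast; ring, this]
      have hU1ne : U ℝ ((k:ℤ)+1) ≠ 0 := fun h => by
        simp [h] at hc1; exact absurd hc1.symm (by positivity)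
      have h2X : ((2*X : ℝ[X])).natDegree = 1 := by
        rw [hC2]; exact natDegree_C_mul_X (2:ℝ) two_ne_zero
      have h2Xne : (2*X : ℝ[X]) ≠ 0 := fun h => by simp [h] at h2X
      have hdA : (2*X*U ℝ ((k:ℤ)+1)).natDegree = k+2 := by
        rw [natDegree_mul h2Xne hU1ne, h2X, hd1]; ring
      have hcA : (2*X*U ℝ ((k:ℤ)+1)).coeff (k+2) = 2^(k+2) := by
        have h : (2*X*U ℝ ((k:ℤ)+1)) = C 2 * (X * U ℝ ((k:ℤ)+1)) := by
          rw [← hC2]; ring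
        rw [h, coeff_C_mul, coeff_X_mul, hc1]; ring
      have hcB : (U ℝ (k:ℤ)).coeff (k+2) = 0 :=
        coeff_eq_zero_of_natDegree_lt (by omega)
      have hcoeff : (U ℝ (((k+2:ℕ)):ℤ)).coeff (k+2) = 2^(k+2) := by
        rw [h2, coeff_sub, hcA, hcB]; ring
      refine ⟨le_antisymm ?_ (le_natDegree_of_ne_zero (by rw [hcoeff]; positivity)), hcoeff⟩
      rw [h2]
      exact le_trans (natDegree_sub_le _ _) (by simp [hdA, hd0])

lemma exists_U_expansion : ∀ (n : ℕ) (P : ℝ[X]), P.natDegree ≤ n →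
    ∃ β : ℕ → ℝ, P = ∑ k ∈ range (n+1), C (β k) * U ℝ (k:ℤ) ∧ β n = P.coeff n / 2^n
  | 0, P, hP => by
      refine ⟨fun _ => P.coeff 0, ?_, by simp⟩
      simp [U_zero, mul_one]
      exact (Polynomial.eq_C_of_natDegree_le_zero hP)
  | (n+1), P, hP => by
      set c := P.coeff (n+1) / 2^(n+1) with hc
      set P' := P - C c * U ℝ ((n+1:ℕ):ℤ) with hP'
      have hUc := (U_deg_coeff_s15 (n+1)).2
      have hUd := (U_deg_coeff_s15 (n+1)).1
      have hP'deg : P'.natDegree ≤ n := by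
        rw [natDegree_le_iff_coeff_eq_zero]
        intro m hm
        rcases eq_or_lt_of_le (Nat.succ_le_of_lt hm) with h | h
        · rw [hP', coeff_sub, coeff_C_mul, ← h, hUc, hc]
          field_simp
          ring
        · rw [hP', coeff_sub, coeff_C_mul,
            coeff_eq_zero_of_natDegree_lt (lt_of_le_of_lt hP h),
            coeff_eq_zero_of_natDegree_lt (by rw [hUd]; exact h)]
          ring
      obtain ⟨β', hβ'sum, -⟩ := exists_U_expansion n P' hP'deg
      refine ⟨fun k => if k = n+1 then c else β' k, ?_, ?_⟩
      · rw [Finset.sum_range_succ]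
        simp only [if_pos rfl]
        have : ∑ k ∈ range (n+1), C (if k = n+1 then c else β' k) * U ℝ (k:ℤ)
            = ∑ k ∈ range (n+1), C (β' k) * U ℝ (k:ℤ) := by
          refine Finset.sum_congr rfl fun k hk => ?_
          rw [if_neg (by simp at hk; omega)]
        rw [this, ← hβ'sum, hP']
        simp
      · simp [hc]

lemma sin_nat_mul_le (θ : ℝ) : ∀ n : ℕ, |sin ((n:ℝ) * θ)| ≤ n * |sin θ|
  | 0 => by simp
  | (n+1) => by
      have h : ((n+1:ℕ):ℝ) * θ = (n:ℝ)*θ + θ := by push_cast; ring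
      rw [h, sin_add]
      calc |sin ((n:ℝ)*θ) * cos θ + cos ((n:ℝ)*θ) * sin θ|
          ≤ |sin ((n:ℝ)*θ) * cos θ| + |cos ((n:ℝ)*θ) * sin θ| := abs_add_le _ _
        _ ≤ |sin ((n:ℝ)*θ)| * 1 + 1 * |sin θ| := by
            rw [abs_mul, abs_mul]
            gcongr <;> [exact abs_cos_le_one θ; exact abs_cos_le_one _]
        _ ≤ (n:ℝ) * |sin θ| + 1 * |sin θ| := by
            have := sin_nat_mul_le θ n; linarith
        _ = ((n+1:ℕ):ℝ) * |sin θ| := by push_cast; ring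

lemma abs_U_le (k : ℕ) {x : ℝ} (hx : x ∈ Icc (-1:ℝ) 1) :
    |(U ℝ (k:ℤ)).eval x| ≤ (k:ℝ) + 1 := by
  have hsub : Ioo (-1:ℝ) 1 ⊆ {y | |(U ℝ (k:ℤ)).eval y| ≤ (k:ℝ)+1} := by
    intro y hy
    set θ := Real.arccos y with hθ
    have hy' : cos θ = y := Real.cos_arccos (le_of_lt hy.1) (le_of_lt hy.2)
    have hθ1 : 0 < θ := Real.arccos_pos.2 hy.2
    have hθ2 : θ < π := lt_of_le_of_ne (Real.arccos_le_pi y) (fun h => by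
      have hcc := Real.cos_arccos (le_of_lt hy.1) (le_of_lt hy.2)
      rw [hθ] at h
      rw [h, Real.cos_pi] at hcc; linarith [hy.1])
    have hsin : 0 < sin θ := Real.sin_pos_of_pos_of_lt_pi hθ1 hθ2
    have hU := U_real_cos θ (k:ℤ)
    rw [hy'] at hU
    have : |(U ℝ (k:ℤ)).eval y| * sin θ ≤ ((k:ℝ)+1) * sin θ := by
      calc |(U ℝ (k:ℤ)).eval y| * sin θ = |(U ℝ (k:ℤ)).eval y * sin θ| := by
            rw [abs_mul, abs_of_pos hsin]
        _ = |sin ((((k:ℤ):ℝ)+1) * θ)| := by rw [hU]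
        _ = |sin (((k+1:ℕ):ℝ) * θ)| := by push_cast; ring_nf
        _ ≤ ((k+1:ℕ):ℝ) * |sin θ| := sin_nat_mul_le θ (k+1)
        _ = ((k:ℝ)+1) * sin θ := by rw [abs_of_pos hsin]; push_cast; ring
    exact le_of_mul_le_mul_right this hsin
  have hclosed : IsClosed {y | |(U ℝ (k:ℤ)).eval y| ≤ (k:ℝ)+1} :=
    isClosed_le ((U ℝ (k:ℤ)).continuous_aeval.abs) continuous_const
  have : Icc (-1:ℝ) 1 ⊆ {y | |(U ℝ (k:ℤ)).eval y| ≤ (k:ℝ)+1} := by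
    rw [← closure_Ioo (by norm_num : (-1:ℝ) ≠ 1)]
    exact hclosed.closure_subset_iff.2 hsub
  exact this hx

lemma integral_cos_mul' {c : ℝ} (hc : c ≠ 0) : ∫ θ in (0:ℝ)..π, cos (c*θ) = sin (c*π)/c := by
  rw [intervalIntegral.integral_comp_mul_left (fun x => cos x) hc]
  simp [integral_cos, div_eq_inv_mul, mul_comm]

lemma sin_orth (j k : ℕ) : (∫ θ in (0:ℝ)..π, sin (((j:ℝ)+1)*θ) * sin (((k:ℝ)+1)*θ))
    = if j = k then π/2 else 0 := by
  have hpt : ∀ θ : ℝ, sin (((j:ℝ)+1)*θ) * sin (((k:ℝ)+1)*θ)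
      = (cos (((j:ℝ)-(k:ℝ))*θ) - cos (((j:ℝ)+(k:ℝ)+2)*θ))/2 := by
    intro θ
    have h1 : ((j:ℝ)-(k:ℝ))*θ = ((j:ℝ)+1)*θ - ((k:ℝ)+1)*θ := by ring
    have h2 : ((j:ℝ)+(k:ℝ)+2)*θ = ((j:ℝ)+1)*θ + ((k:ℝ)+1)*θ := by ring
    rw [h1, h2, cos_sub, cos_add]; ring
  rw [intervalIntegral.integral_congr (g := fun θ => (cos (((j:ℝ)-(k:ℝ))*θ) - cos (((j:ℝ)+(k:ℝ)+2)*θ))/2) (fun θ _ => hpt θ)]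
  have hi1 : IntervalIntegrable (fun θ => cos (((j:ℝ)-(k:ℝ))*θ)) MeasureTheory.volume 0 π := by
    apply Continuous.intervalIntegrable; continuity
  have hi2 : IntervalIntegrable (fun θ => cos (((j:ℝ)+(k:ℝ)+2)*θ)) MeasureTheory.volume 0 π := by
    apply Continuous.intervalIntegrable; continuity
  rw [intervalIntegral.integral_div, intervalIntegral.integral_sub hi1 hi2]
  have hz : ∫ θ in (0:ℝ)..π, cos (((j:ℝ)+(k:ℝ)+2)*θ) = 0 := by
    rw [integral_cos_mul' (by positivity)]
    have : ((j:ℝ)+(k:ℝ)+2)*π = ((j+k+2:ℤ):ℝ)*π := by push_cast; ring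
    rw [this, Real.sin_int_mul_pi]; simp
  rcases eq_or_ne j k with h | h
  · subst h
    simp only [if_pos rfl, sub_self, hz]
    norm_num
  · rw [if_neg h, hz]
    have hne : ((j:ℝ)-(k:ℝ)) ≠ 0 := by
      intro hh
      apply h
      have : (j:ℝ) = k := by linarith
      exact_mod_cast this
    rw [integral_cos_mul' hne]
    have : ((j:ℝ)-(k:ℝ))*π = (((j-k:ℤ)):ℝ)*π := by push_cast; ring
    rw [this, Real.sin_int_mul_pi]
    simp

lemma interval_CS {f g : ℝ → ℝ} (hf : Continuous f) (hg : Continuous g) :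
    (∫ θ in (0:ℝ)..π, f θ * g θ)^2
      ≤ (∫ θ in (0:ℝ)..π, (f θ)^2) * (∫ θ in (0:ℝ)..π, (g θ)^2) := by
  set A := ∫ θ in (0:ℝ)..π, (f θ)^2 with hA
  set B := ∫ θ in (0:ℝ)..π, f θ * g θ with hB
  set Cc := ∫ θ in (0:ℝ)..π, (g θ)^2 with hC
  have h0 : ∀ t : ℝ, 0 ≤ A * t^2 + (2*B) * t + Cc := by
    intro t
    have hnn : 0 ≤ ∫ θ in (0:ℝ)..π, (t * f θ + g θ)^2 :=
      intervalIntegral.integral_nonneg pi_pos.le (fun θ _ => sq_nonneg _)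
    have hexp : (∫ θ in (0:ℝ)..π, (t * f θ + g θ)^2) = A * t^2 + (2*B) * t + Cc := by
      have hpt : ∀ θ : ℝ, (t * f θ + g θ)^2
          = t^2 * (f θ)^2 + (2*t) * (f θ * g θ) + (g θ)^2 := fun θ => by ring
      rw [intervalIntegral.integral_congr (fun θ _ => hpt θ)]
      have i1 : IntervalIntegrable (fun θ => t^2 * (f θ)^2) MeasureTheory.volume 0 π :=
        (Continuous.intervalIntegrable (by continuity) _ _)
      have i2 : IntervalIntegrable (fun θ => (2*t) * (f θ * g θ)) MeasureTheory.volume 0 π :=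
        (Continuous.intervalIntegrable (by continuity) _ _)
      have i3 : IntervalIntegrable (fun θ => (g θ)^2) MeasureTheory.volume 0 π :=
        (Continuous.intervalIntegrable (by continuity) _ _)
      rw [intervalIntegral.integral_add (i1.add i2) i3, intervalIntegral.integral_add i1 i2,
        intervalIntegral.integral_const_mul, intervalIntegral.integral_const_mul]
      ring
    linarith [hexp ▸ hnn]
  have hd : discrim A (2*B) Cc ≤ 0 := discrim_le_zero (fun t => by linarith [h0 t])
  rw [discrim] at hd
  nlinarith [hd]

lemma cos_substitution (Q : ℝ[X]) :
    ∫ x in (-1:ℝ)..1, Q.eval x = ∫ θ in (0:ℝ)..π, Q.eval (cos θ) * sin θ := by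
  have h := intervalIntegral.integral_comp_smul_deriv (a := 0) (b := π)
    (f := fun θ => cos θ) (f' := fun θ => -sin θ) (g := fun x => Q.eval x)
    (fun x _ => Real.hasDerivAt_cos x) (continuous_sin.neg).continuousOn Q.continuous_aeval
  simp only [Real.cos_zero, Real.cos_pi, Function.comp] at h
  have h2 : (∫ θ in (0:ℝ)..π, (-sin θ) • Q.eval (cos θ))
      = - ∫ θ in (0:ℝ)..π, Q.eval (cos θ) * sin θ := by
    rw [← intervalIntegral.integral_neg]
    apply intervalIntegral.integral_congr
    intro θ _
    simp [smul_eq_mul]; ring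
  rw [h2] at h
  have h3 : (∫ x in (1:ℝ)..(-1:ℝ), Q.eval x) = - ∫ x in (-1:ℝ)..1, Q.eval x :=
    intervalIntegral.integral_symm _ _
  rw [h3] at h
  linarith [h]

lemma key_coeff_bound (n : ℕ) (P : ℝ[X]) (k : ℕ) (hk : k ≤ n)
    (β : ℕ → ℝ) (hβ : P = ∑ i ∈ range (n+1), C (β i) * U ℝ (i:ℤ)) :
    (π/2) * (β k)^2 ≤ ∫ x in (-1:ℝ)..1, (P.eval x)^2 := by
  set g : ℝ → ℝ := fun θ => ∑ i ∈ range (n+1), β i * sin (((i:ℝ)+1)*θ) with hgdef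
  have hgcont : Continuous g := by
    apply continuous_finset_sum
    intro i _
    continuity
  have hg : ∀ θ : ℝ, P.eval (cos θ) * sin θ = g θ := by
    intro θ
    rw [hβ, eval_finset_sum, Finset.sum_mul]
    refine Finset.sum_congr rfl fun i _ => ?_
    have := U_real_cos θ (i:ℤ)
    rw [eval_mul, eval_C, mul_assoc, this]
    norm_num
  -- orthogonality: ∫ g * sin((k+1)θ) = β k * (π/2)
  have horth : (∫ θ in (0:ℝ)..π, g θ * sin (((k:ℝ)+1)*θ)) = β k * (π/2) := by
    have : (∫ θ in (0:ℝ)..π, g θ * sin (((k:ℝ)+1)*θ))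
        = ∑ i ∈ range (n+1), ∫ θ in (0:ℝ)..π, β i * (sin (((i:ℝ)+1)*θ) * sin (((k:ℝ)+1)*θ)) := by
      rw [← intervalIntegral.integral_finset_sum]
      · apply intervalIntegral.integral_congr
        intro θ _
        simp only [hgdef, Finset.sum_mul]
        exact Finset.sum_congr rfl fun i _ => by ring
      · intro i _
        exact Continuous.intervalIntegrable (by continuity) _ _
    rw [this]
    have : ∀ i ∈ range (n+1), (∫ θ in (0:ℝ)..π, β i * (sin (((i:ℝ)+1)*θ) * sin (((k:ℝ)+1)*θ)))
        = if i = k then β i * (π/2) else 0 := by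
      intro i _
      rw [intervalIntegral.integral_const_mul, sin_orth i k]
      split_ifs <;> simp
    rw [Finset.sum_congr rfl this, Finset.sum_ite_eq' (range (n+1)) k (fun i => β i * (π/2))]
    simp [Finset.mem_range, Nat.lt_succ_of_le hk]
  -- ∫ g^2 ≤ ∫_{-1}^1 P^2
  have hgsq : (∫ θ in (0:ℝ)..π, (g θ)^2) ≤ ∫ x in (-1:ℝ)..1, (P.eval x)^2 := by
    have hsub := cos_substitution (P^2)
    simp only [eval_pow] at hsub
    rw [hsub]
    have c1 : Continuous fun θ : ℝ => (g θ)^2 := hgcont.pow 2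
    have c2 : Continuous fun θ : ℝ => (P.eval (cos θ))^2 * sin θ :=
      ((P.continuous_aeval.comp continuous_cos).pow 2).mul continuous_sin
    apply intervalIntegral.integral_mono_on pi_pos.le
      (c1.intervalIntegrable _ _) (c2.intervalIntegrable _ _)
    intro θ hθ
    have hs0 : 0 ≤ sin θ := Real.sin_nonneg_of_nonneg_of_le_pi hθ.1 hθ.2
    have hs1 : sin θ ≤ 1 := Real.sin_le_one θ
    rw [← hg θ]
    calc (P.eval (cos θ) * sin θ)^2 = (P.eval (cos θ))^2 * (sin θ * sin θ) := by ring
      _ ≤ (P.eval (cos θ))^2 * (sin θ * 1) := by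
          apply mul_le_mul_of_nonneg_left _ (sq_nonneg _)
          exact mul_le_mul_of_nonneg_left hs1 hs0
      _ = (P.eval (cos θ))^2 * sin θ := by ring
  -- Cauchy-Schwarz
  have csin : Continuous fun θ : ℝ => sin (((k:ℝ)+1)*θ) :=
    continuous_sin.comp (continuous_const.mul continuous_id)
  have hCS := interval_CS hgcont csin
  rw [horth] at hCS
  have hss : (∫ θ in (0:ℝ)..π, (sin (((k:ℝ)+1)*θ))^2) = π/2 := by
    have := sin_orth k k
    rw [if_pos rfl] at this
    rw [← this]
    exact intervalIntegral.integral_congr fun θ _ => sq (sin (((k:ℝ)+1)*θ))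
  have hgnn : 0 ≤ ∫ θ in (0:ℝ)..π, (g θ)^2 :=
    intervalIntegral.integral_nonneg pi_pos.le (fun θ _ => sq_nonneg _)
  have hπ : (0:ℝ) < π/2 := by positivity
  -- (β k * (π/2))^2 ≤ (∫g²) * (π/2)  ⇒  (π/2) * βk² ≤ ∫g²
  have h1 : (π/2) * (β k)^2 ≤ ∫ θ in (0:ℝ)..π, (g θ)^2 := by
    nlinarith [hCS]
  linarith

lemma integral_sq_nonneg (P : ℝ[X]) : 0 ≤ ∫ y in (-1:ℝ)..1, (P.eval y)^2 :=
  intervalIntegral.integral_nonneg (by norm_num) (fun y _ => sq_nonneg _)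

lemma nikolskii_unit (n : ℕ) (P : ℝ[X]) (hP : P.natDegree ≤ n) {x : ℝ}
    (hx : x ∈ Icc (-1:ℝ) 1) :
    |P.eval x| ≤ ((n:ℝ)+1)^2 * Real.sqrt (2/π) * Real.sqrt (∫ y in (-1:ℝ)..1, (P.eval y)^2) := by
  obtain ⟨β, hβ, -⟩ := exists_U_expansion n P hP
  set I := ∫ y in (-1:ℝ)..1, (P.eval y)^2 with hI
  have hInn : 0 ≤ I := integral_sq_nonneg P
  have hβbound : ∀ k, k ≤ n → |β k| ≤ Real.sqrt (2/π) * Real.sqrt I := by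
    intro k hk
    have h := key_coeff_bound n P k hk β hβ
    have h2 : (β k)^2 ≤ (2/π) * I := by
      have hπ : (0:ℝ) < π := pi_pos
      rw [div_mul_eq_mul_div, le_div_iff₀ hπ] at *
      nlinarith [h]
    calc |β k| = Real.sqrt ((β k)^2) := (Real.sqrt_sq_eq_abs _).symm
      _ ≤ Real.sqrt ((2/π) * I) := Real.sqrt_le_sqrt h2
      _ = Real.sqrt (2/π) * Real.sqrt I := Real.sqrt_mul (by positivity) I
  have heval : P.eval x = ∑ k ∈ range (n+1), β k * (U ℝ (k:ℤ)).eval x := by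
    rw [hβ, eval_finset_sum]
    exact Finset.sum_congr rfl fun k _ => by rw [eval_mul, eval_C]
  rw [heval]
  calc |∑ k ∈ range (n+1), β k * (U ℝ (k:ℤ)).eval x|
      ≤ ∑ k ∈ range (n+1), |β k * (U ℝ (k:ℤ)).eval x| := Finset.abs_sum_le_sum_abs _ _
    _ ≤ ∑ k ∈ range (n+1), (Real.sqrt (2/π) * Real.sqrt I) * ((n:ℝ)+1) := by
        apply Finset.sum_le_sum
        intro k hk
        rw [abs_mul]
        have h1 : |β k| ≤ Real.sqrt (2/π) * Real.sqrt I :=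
          hβbound k (by simpa [Nat.lt_succ_iff] using hk)
        have h2 : |(U ℝ (k:ℤ)).eval x| ≤ (k:ℝ)+1 := abs_U_le k hx
        have h3 : ((k:ℝ))+1 ≤ (n:ℝ)+1 := by
          have : k ≤ n := by simpa [Nat.lt_succ_iff] using hk
          exact_mod_cast by omega
        exact mul_le_mul h1 (le_trans h2 h3) (abs_nonneg _) (by positivity)
    _ = ((n:ℝ)+1) * ((n:ℝ)+1) * (Real.sqrt (2/π) * Real.sqrt I) := by
        rw [Finset.sum_const, Finset.card_range]
        push_cast; ring
    _ = ((n:ℝ)+1)^2 * Real.sqrt (2/π) * Real.sqrt I := by ring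

lemma lower_unit (n : ℕ) (P : ℝ[X]) (hP : P.natDegree ≤ n) :
    (π/2) * (P.coeff n / 2^n)^2 ≤ ∫ y in (-1:ℝ)..1, (P.eval y)^2 := by
  obtain ⟨β, hβ, hβn⟩ := exists_U_expansion n P hP
  have := key_coeff_bound n P n le_rfl β hβ
  rwa [hβn] at this

section affine
variable {α β : ℝ} (h : α < β) (P : ℝ[X])

noncomputable def affQ (α β : ℝ) (P : ℝ[X]) : ℝ[X] :=
  P.comp (C ((β-α)/2) * X + C ((α+β)/2))

lemma affQ_eval (u : ℝ) : (affQ α β P).eval u = P.eval (((β-α)/2)*u + (α+β)/2) := by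
  simp [affQ, eval_comp]

lemma affQ_natDegree (h : α < β) : (affQ α β P).natDegree = P.natDegree := by
  rw [affQ, natDegree_comp, natDegree_linear (by intro hh; simp at hh; linarith)]
  ring

lemma affQ_integral (h : α < β) :
    (∫ u in (-1:ℝ)..1, ((affQ α β P).eval u)^2) = (2/(β-α)) * ∫ t in α..β, (P.eval t)^2 := by
  have he : ((β-α)/2 : ℝ) ≠ 0 := by intro hh; simp at hh; linarith
  have := intervalIntegral.integral_comp_mul_add (a := (-1:ℝ)) (b := 1)
    (fun x => (P.eval x)^2) he ((α+β)/2)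
  simp only [smul_eq_mul] at this
  have h1 : ((β-α)/2) * (-1) + (α+β)/2 = α := by ring
  have h2 : ((β-α)/2) * 1 + (α+β)/2 = β := by ring
  rw [h1, h2] at this
  have h3 : (∫ u in (-1:ℝ)..1, ((affQ α β P).eval u)^2)
      = ∫ u in (-1:ℝ)..1, (P.eval (((β-α)/2)*u + (α+β)/2))^2 :=
    intervalIntegral.integral_congr fun u _ => by rw [affQ_eval]
  rw [h3, this, inv_div]

lemma nikolskii_interval (h : α < β) (n : ℕ) (hP : P.natDegree ≤ n) {x : ℝ}
    (hx : x ∈ Icc α β) :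
    |P.eval x| ≤ ((n:ℝ)+1)^2 * Real.sqrt (2/π) * Real.sqrt (2/(β-α))
      * Real.sqrt (∫ t in α..β, (P.eval t)^2) := by
  set e := (β-α)/2 with hedef
  have he : 0 < e := by simp [hedef]; linarith
  set u := (x - (α+β)/2)/e with hu
  have hux : e*u + (α+β)/2 = x := by rw [hu]; field_simp; ring
  have hu1 : u ∈ Icc (-1:ℝ) 1 := by
    constructor
    · rw [hu, le_div_iff₀ he]; simp [hedef]; linarith [hx.1]
    · rw [hu, div_le_iff₀ he]; simp [hedef]; linarith [hx.2]
  have hQdeg : (affQ α β P).natDegree ≤ n := by rw [affQ_natDegree P h]; exact hP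
  have hbound := nikolskii_unit n (affQ α β P) hQdeg hu1
  rw [affQ_eval, hux] at hbound
  rw [affQ_integral P h] at hbound
  have hnn : 0 ≤ ∫ t in α..β, (P.eval t)^2 :=
    intervalIntegral.integral_nonneg h.le (fun y _ => sq_nonneg _)
  rw [Real.sqrt_mul (le_of_lt (div_pos two_pos (by linarith))) _] at hbound
  calc |P.eval x| ≤ ((n:ℝ)+1)^2 * Real.sqrt (2/π)
        * (Real.sqrt (2/(β-α)) * Real.sqrt (∫ t in α..β, (P.eval t)^2)) := hbound
    _ = ((n:ℝ)+1)^2 * Real.sqrt (2/π) * Real.sqrt (2/(β-α))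
        * Real.sqrt (∫ t in α..β, (P.eval t)^2) := by ring

lemma lower_interval (h : α < β) (n : ℕ) (hP : P.Monic) (hdeg : P.natDegree = n) :
    (π/2) * ((β-α)/2) * (((β-α)/4)^n)^2 ≤ ∫ t in α..β, (P.eval t)^2 := by
  set e := (β-α)/2 with hedef
  have he : 0 < e := by simp [hedef]; linarith
  have hQdeg : (affQ α β P).natDegree = n := by rw [affQ_natDegree P h]; exact hdeg
  have hlc : (affQ α β P).coeff n = e^n := by
    have h1 : (affQ α β P).coeff n = (affQ α β P).leadingCoeff := by
      rw [leadingCoeff, hQdeg]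
    rw [h1, affQ, leadingCoeff_comp (by rw [natDegree_linear (by intro hh; simp at hh; linarith)]; norm_num)]
    rw [hP.leadingCoeff, leadingCoeff_linear (by intro hh; simp at hh; linarith), hdeg]
    simp [hedef]
  have hlow := lower_unit n (affQ α β P) hQdeg.le
  rw [hlc] at hlow
  rw [affQ_integral P h] at hlow
  have h2 : e^n/2^n = ((β-α)/4)^n := by
    rw [hedef, ← div_pow, div_div]
    norm_num
  rw [h2] at hlow
  have hepos : (0:ℝ) < 2/(β-α) := div_pos two_pos (by linarith)
  have hne : β - α ≠ 0 := by linarith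
  calc (π/2) * ((β-α)/2) * (((β-α)/4)^n)^2
      = ((β-α)/2) * ((π/2) * (((β-α)/4)^n)^2) := by ring
    _ ≤ ((β-α)/2) * ((2/(β-α)) * ∫ t in α..β, (P.eval t)^2) := by
        apply mul_le_mul_of_nonneg_left hlow he.le
    _ = ∫ t in α..β, (P.eval t)^2 := by field_simp

lemma log_div_tendsto : Tendsto (fun n : ℕ => Real.log ((n:ℝ)+1) / (n:ℝ)) atTop (nhds 0) := by
  have h1 : Tendsto (fun x : ℝ => Real.log x / x) atTop (nhds 0) :=
    Real.isLittleO_log_id_atTop.tendsto_div_nhds_zero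
  have h2 : Tendsto (fun n : ℕ => (n:ℝ)+1) atTop atTop :=
    tendsto_atTop_add_const_right _ 1 tendsto_natCast_atTop_atTop
  have h3 : Tendsto (fun n : ℕ => Real.log ((n:ℝ)+1) / ((n:ℝ)+1)) atTop (nhds 0) :=
    h1.comp h2
  have h4 : Tendsto (fun n : ℕ => ((n:ℝ)+1)/(n:ℝ)) atTop (nhds 1) := by
    have : Tendsto (fun n : ℕ => 1 + 1/(n:ℝ)) atTop (nhds (1+0)) :=
      tendsto_const_nhds.add (tendsto_one_div_atTop_nhds_zero_nat)
    rw [add_zero] at this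
    apply this.congr'
    filter_upwards [eventually_ne_atTop 0] with n hn
    field_simp
  have h5 := h3.mul h4
  rw [zero_mul] at h5
  apply h5.congr'
  filter_upwards [eventually_ne_atTop 0] with n hn
  have hn' : (n:ℝ) ≠ 0 := Nat.cast_ne_zero.2 hn
  have hn1 : (n:ℝ)+1 ≠ 0 := by positivity
  field_simp

lemma root_const_tendsto_one {c : ℝ} (hc : 0 < c) :
    Tendsto (fun n : ℕ => c ^ (1/(n:ℝ))) atTop (nhds 1) := by
  have h : ∀ n : ℕ, c ^ (1/(n:ℝ)) = Real.exp (Real.log c * (1/(n:ℝ))) := fun n =>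
    Real.rpow_def_of_pos hc _
  simp only [h]
  have harg : Tendsto (fun n : ℕ => Real.log c * (1/(n:ℝ))) atTop (nhds 0) := by
    have := tendsto_const_nhds (x := Real.log c) (f := atTop (α := ℕ))
    have h2 := this.mul tendsto_one_div_atTop_nhds_zero_nat
    rwa [mul_zero] at h2
  have := (Real.continuous_exp.tendsto 0).comp harg
  rwa [Real.exp_zero] at this

lemma root_poly_tendsto_one {E : ℝ} (hE : 0 < E) :
    Tendsto (fun n : ℕ => (((n:ℝ)+1)^2 * E) ^ (1/(n:ℝ))) atTop (nhds 1) := by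
  have hpos : ∀ n : ℕ, (0:ℝ) < ((n:ℝ)+1)^2 * E := fun n => by positivity
  have h : ∀ n : ℕ, (((n:ℝ)+1)^2 * E) ^ (1/(n:ℝ))
      = Real.exp ((2 * Real.log ((n:ℝ)+1) + Real.log E) * (1/(n:ℝ))) := by
    intro n
    rw [Real.rpow_def_of_pos (hpos n), Real.log_mul (by positivity) hE.ne',
      Real.log_pow]
    norm_num
  simp only [h]
  have harg : Tendsto (fun n : ℕ => (2 * Real.log ((n:ℝ)+1) + Real.log E) * (1/(n:ℝ)))
      atTop (nhds 0) := by
    have h1 : Tendsto (fun n : ℕ => 2 * (Real.log ((n:ℝ)+1) / (n:ℝ))) atTop (nhds (2*0)) :=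
      tendsto_const_nhds.mul log_div_tendsto
    have h2 : Tendsto (fun n : ℕ => Real.log E * (1/(n:ℝ))) atTop (nhds (Real.log E * 0)) :=
      tendsto_const_nhds.mul tendsto_one_div_atTop_nhds_zero_nat
    have h3 := h1.add h2
    rw [mul_zero, mul_zero, add_zero] at h3
    apply h3.congr
    intro n
    field_simp
  have := (Real.continuous_exp.tendsto 0).comp harg
  rwa [Real.exp_zero] at this

/-- With `t N` the minimal sup norm and `s N` the minimal `L2` norm on `K` over monic
polynomials of degree `N`, one has `s_N^{1/N} / t_N^{1/N} → 1`; in particular if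
`t_N^{1/N} → c` then also `s_N^{1/N} → c`. -/
theorem L2_and_sup_chebyshev_numbers_same_root_asymptotics
    (L : ℕ) (hL : 0 < L) (a b : ℕ → ℝ)
    (ha0 : a 0 = -1) (hbL : b (L - 1) = 1)
    (hab : ∀ ℓ < L, a ℓ < b ℓ)
    (hgap : ∀ ℓ, ℓ + 1 < L → b ℓ < a (ℓ + 1))
    (t s : ℕ → ℝ)
    (ht : ∀ n, t n = sInf { r : ℝ | ∃ P : Polynomial ℝ, P.Monic ∧ P.natDegree = n ∧
        r = supK L a b P })
    (hs : ∀ n, s n = sInf { r : ℝ | ∃ P : Polynomial ℝ, P.Monic ∧ P.natDegree = n ∧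
        r = L2K L a b P }) :
    Tendsto (fun n => s n ^ (1 / (n : ℝ)) / t n ^ (1 / (n : ℝ))) atTop (nhds 1) ∧
    ∀ c : ℝ, Tendsto (fun n => t n ^ (1 / (n : ℝ))) atTop (nhds c) →
      Tendsto (fun n => s n ^ (1 / (n : ℝ))) atTop (nhds c) := by
  have hb0 : a 0 < b 0 := hab 0 hL
  set K : Set ℝ := ⋃ ℓ ∈ Finset.range L, Set.Icc (a ℓ) (b ℓ) with hKdef
  have hKcpt : IsCompact K := (Finset.range L).isCompact_biUnion (fun ℓ _ => isCompact_Icc)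
  have ha0K : a 0 ∈ K := Set.mem_iUnion₂.2 ⟨0, Finset.mem_range.2 hL, Set.left_mem_Icc.2 hb0.le⟩
  have hKne : K.Nonempty := ⟨a 0, ha0K⟩
  -- sup norm basics
  have himne : ∀ P : ℝ[X], ((fun x => |P.eval x|) '' K).Nonempty :=
    fun P => hKne.image _
  have hbdd : ∀ P : ℝ[X], BddAbove ((fun x => |P.eval x|) '' K) :=
    fun P => (hKcpt.image (P.continuous_aeval.abs)).bddAbove
  have hF1 : ∀ (P : ℝ[X]) (x : ℝ), x ∈ K → |P.eval x| ≤ supK L a b P :=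
    fun P x hx => le_csSup (hbdd P) (Set.mem_image_of_mem _ hx)
  have hF3 : ∀ (P : ℝ[X]) (M : ℝ), (∀ x ∈ K, |P.eval x| ≤ M) → supK L a b P ≤ M :=
    fun P M h => csSup_le (himne P) (by rintro r ⟨x, hx, rfl⟩; exact h x hx)
  have hF2 : ∀ P : ℝ[X], 0 ≤ supK L a b P :=
    fun P => le_trans (abs_nonneg _) (hF1 P (a 0) ha0K)
  -- L2 basics
  have hterm : ∀ (P : ℝ[X]) (ℓ : ℕ), ℓ < L → 0 ≤ ∫ x in (a ℓ)..(b ℓ), (P.eval x)^2 :=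
    fun P ℓ hℓ => intervalIntegral.integral_nonneg (hab ℓ hℓ).le (fun x _ => sq_nonneg _)
  have hsum_nn : ∀ P : ℝ[X], 0 ≤ ∑ ℓ ∈ Finset.range L, ∫ x in (a ℓ)..(b ℓ), (P.eval x)^2 :=
    fun P => Finset.sum_nonneg (fun ℓ hℓ => hterm P ℓ (Finset.mem_range.1 hℓ))
  have hL2nn : ∀ P : ℝ[X], 0 ≤ L2K L a b P := fun P => Real.sqrt_nonneg _
  have hsingle : ∀ (P : ℝ[X]) (ℓ : ℕ), ℓ ∈ Finset.range L →
      (∫ x in (a ℓ)..(b ℓ), (P.eval x)^2)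
        ≤ ∑ j ∈ Finset.range L, ∫ x in (a j)..(b j), (P.eval x)^2 :=
    fun P ℓ hℓ => Finset.single_le_sum
      (fun j hj => hterm P j (Finset.mem_range.1 hj)) hℓ
  have hmono : ∀ m, m < L → (∑ ℓ ∈ Finset.range (m+1), (b ℓ - a ℓ)) ≤ b m - a 0 := by
    intro m
    induction m with
    | zero => intro _; simp [Finset.sum_range_one]
    | succ k ih =>
      intro hk
      have h1 := ih (by omega)
      have h2 : b k < a (k+1) := hgap k hk
      rw [Finset.sum_range_succ]
      linarith
  have hlen : (∑ ℓ ∈ Finset.range L, (b ℓ - a ℓ)) ≤ 2 := by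
    obtain ⟨m, rfl⟩ : ∃ m, L = m + 1 := ⟨L-1, by omega⟩
    have h1 := hmono m (by omega)
    have h2 : b m = 1 := by simpa using hbL
    rw [ha0] at h1
    linarith
  -- L2K ≤ √2 supK
  have hs2pos : (0:ℝ) < Real.sqrt 2 := Real.sqrt_pos.2 two_pos
  have hL2_le_sup : ∀ P : ℝ[X], L2K L a b P ≤ Real.sqrt 2 * supK L a b P := by
    intro P
    have hptsq : ∀ ℓ, ℓ < L → (∫ x in (a ℓ)..(b ℓ), (P.eval x)^2)
        ≤ (b ℓ - a ℓ) * (supK L a b P)^2 := by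
      intro ℓ hℓ
      have hIccK : Set.Icc (a ℓ) (b ℓ) ⊆ K := fun x hx =>
        Set.mem_iUnion₂.2 ⟨ℓ, Finset.mem_range.2 hℓ, hx⟩
      have hm := intervalIntegral.integral_mono_on (μ := volume) (hab ℓ hℓ).le
        ((P.continuous_aeval.pow 2).intervalIntegrable _ _)
        (_root_.intervalIntegrable_const (c := (supK L a b P)^2))
        (fun x hx => by
          have h1 := hF1 P x (hIccK hx)
          calc (P.eval x)^2 = |P.eval x|^2 := (sq_abs _).symm
            _ ≤ (supK L a b P)^2 := pow_le_pow_left₀ (abs_nonneg _) h1 2)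
      simpa [intervalIntegral.integral_const, smul_eq_mul] using hm
    have hsum : (∑ ℓ ∈ Finset.range L, ∫ x in (a ℓ)..(b ℓ), (P.eval x)^2)
        ≤ 2 * (supK L a b P)^2 := by
      calc (∑ ℓ ∈ Finset.range L, ∫ x in (a ℓ)..(b ℓ), (P.eval x)^2)
          ≤ ∑ ℓ ∈ Finset.range L, (b ℓ - a ℓ) * (supK L a b P)^2 :=
            Finset.sum_le_sum (fun ℓ hℓ => hptsq ℓ (Finset.mem_range.1 hℓ))
        _ = (∑ ℓ ∈ Finset.range L, (b ℓ - a ℓ)) * (supK L a b P)^2 := by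
            rw [Finset.sum_mul]
        _ ≤ 2 * (supK L a b P)^2 :=
            mul_le_mul_of_nonneg_right hlen (sq_nonneg _)
    calc L2K L a b P ≤ Real.sqrt (2 * (supK L a b P)^2) := Real.sqrt_le_sqrt hsum
      _ = Real.sqrt 2 * supK L a b P := by
          rw [Real.sqrt_mul (by norm_num : (0:ℝ) ≤ 2), Real.sqrt_sq (hF2 P)]
  -- Nikolskii at K level
  set Ecst : ℝ := ∑ ℓ ∈ Finset.range L, Real.sqrt (2/(b ℓ - a ℓ)) with hE
  have hEpos : 0 < Ecst := Finset.sum_pos' (fun ℓ _ => Real.sqrt_nonneg _)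
    ⟨0, Finset.mem_range.2 hL, Real.sqrt_pos.2 (div_pos two_pos (by linarith))⟩
  set E2 : ℝ := Real.sqrt (2/π) * Ecst with hE2
  have hE2pos : 0 < E2 := mul_pos (Real.sqrt_pos.2 (by positivity)) hEpos
  set C : ℕ → ℝ := fun n => ((n:ℝ)+1)^2 * E2 with hCdef
  have hCpos : ∀ n, 0 < C n := fun n => by
    have := hE2pos; positivity
  have hNik : ∀ (n : ℕ) (P : ℝ[X]), P.natDegree ≤ n →
      supK L a b P ≤ C n * L2K L a b P := by
    intro n P hP
    apply hF3
    intro x hx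
    obtain ⟨ℓ, hℓ, hxℓ⟩ := Set.mem_iUnion₂.1 hx
    have hℓL : ℓ < L := Finset.mem_range.1 hℓ
    have h1 := nikolskii_interval P (hab ℓ hℓL) n hP hxℓ
    have h2 : Real.sqrt (∫ x in (a ℓ)..(b ℓ), (P.eval x)^2) ≤ L2K L a b P :=
      Real.sqrt_le_sqrt (hsingle P ℓ hℓ)
    have h3 : Real.sqrt (2/(b ℓ - a ℓ)) ≤ Ecst :=
      Finset.single_le_sum (f := fun j => Real.sqrt (2/(b j - a j)))
        (fun j _ => Real.sqrt_nonneg _) hℓ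
    calc |P.eval x| ≤ ((n:ℝ)+1)^2 * Real.sqrt (2/π) * Real.sqrt (2/(b ℓ - a ℓ))
          * Real.sqrt (∫ t in (a ℓ)..(b ℓ), (P.eval t)^2) := h1
      _ = (((n:ℝ)+1)^2 * Real.sqrt (2/π))
          * (Real.sqrt (2/(b ℓ - a ℓ)) * Real.sqrt (∫ t in (a ℓ)..(b ℓ), (P.eval t)^2)) := by
          ring
      _ ≤ (((n:ℝ)+1)^2 * Real.sqrt (2/π)) * (Ecst * L2K L a b P) := by
          apply mul_le_mul_of_nonneg_left _ (by positivity)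
          exact mul_le_mul h3 h2 (Real.sqrt_nonneg _) (le_trans (Real.sqrt_nonneg _) h3)
      _ = C n * L2K L a b P := by rw [hCdef, hE2]; ring
  -- lower bound
  have hba : (0:ℝ) < b 0 - a 0 := by linarith
  set ρ : ℕ → ℝ := fun n => Real.sqrt ((π/2) * ((b 0 - a 0)/2) * (((b 0 - a 0)/4)^n)^2)
    with hρ
  have hρpos : ∀ n, 0 < ρ n := fun n => Real.sqrt_pos.2 (by
    apply mul_pos (mul_pos (by positivity) (by linarith))
    exact pow_pos (pow_pos (div_pos hba (by norm_num)) n) 2)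
  have hlow : ∀ (n : ℕ) (P : ℝ[X]), P.Monic → P.natDegree = n → ρ n ≤ L2K L a b P := by
    intro n P hm hd
    have h1 := lower_interval P hb0 n hm hd
    have h2 := hsingle P 0 (Finset.mem_range.2 hL)
    exact Real.sqrt_le_sqrt (le_trans h1 h2)
  -- set nonemptiness / boundedness
  have hTne : ∀ n, { r : ℝ | ∃ P : Polynomial ℝ, P.Monic ∧ P.natDegree = n ∧
      r = supK L a b P }.Nonempty :=
    fun n => ⟨supK L a b (X^n), X^n, monic_X_pow n, natDegree_X_pow n, rfl⟩
  have hSne : ∀ n, { r : ℝ | ∃ P : Polynomial ℝ, P.Monic ∧ P.natDegree = n ∧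
      r = L2K L a b P }.Nonempty :=
    fun n => ⟨L2K L a b (X^n), X^n, monic_X_pow n, natDegree_X_pow n, rfl⟩
  have hTbdd : ∀ n, BddBelow { r : ℝ | ∃ P : Polynomial ℝ, P.Monic ∧ P.natDegree = n ∧
      r = supK L a b P } :=
    fun n => ⟨0, by rintro r ⟨P, -, -, rfl⟩; exact hF2 P⟩
  have hSbdd : ∀ n, BddBelow { r : ℝ | ∃ P : Polynomial ℝ, P.Monic ∧ P.natDegree = n ∧
      r = L2K L a b P } :=
    fun n => ⟨0, by rintro r ⟨P, -, -, rfl⟩; exact hL2nn P⟩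
  -- inequalities on s, t
  have hs_ge : ∀ n, ρ n ≤ s n := by
    intro n; rw [hs n]
    apply le_csInf (hSne n)
    rintro r ⟨P, hm, hd, rfl⟩
    exact hlow n P hm hd
  have ht_ge : ∀ n, ρ n / Real.sqrt 2 ≤ t n := by
    intro n; rw [ht n]
    apply le_csInf (hTne n)
    rintro r ⟨P, hm, hd, rfl⟩
    rw [div_le_iff₀ hs2pos]
    have h1 := hL2_le_sup P
    have h2 := hlow n P hm hd
    calc ρ n ≤ L2K L a b P := h2
      _ ≤ Real.sqrt 2 * supK L a b P := h1
      _ = supK L a b P * Real.sqrt 2 := by ring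
  have hspos : ∀ n, 0 < s n := fun n => lt_of_lt_of_le (hρpos n) (hs_ge n)
  have htpos : ∀ n, 0 < t n := fun n =>
    lt_of_lt_of_le (div_pos (hρpos n) hs2pos) (ht_ge n)
  have hst : ∀ n, s n ≤ Real.sqrt 2 * t n := by
    intro n
    have hkey : ∀ r ∈ { r : ℝ | ∃ P : Polynomial ℝ, P.Monic ∧ P.natDegree = n ∧
        r = supK L a b P }, s n / Real.sqrt 2 ≤ r := by
      rintro r ⟨P, hm, hd, rfl⟩
      rw [div_le_iff₀ hs2pos]
      have h1 : s n ≤ L2K L a b P := by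
        rw [hs n]
        exact csInf_le (hSbdd n) ⟨P, hm, hd, rfl⟩
      calc s n ≤ L2K L a b P := h1
        _ ≤ Real.sqrt 2 * supK L a b P := hL2_le_sup P
        _ = supK L a b P * Real.sqrt 2 := by ring
    have := le_csInf (hTne n) hkey
    rw [← ht n] at this
    rw [div_le_iff₀ hs2pos] at this
    linarith [this]
  have hts : ∀ n, t n ≤ C n * s n := by
    intro n
    have hkey : ∀ r ∈ { r : ℝ | ∃ P : Polynomial ℝ, P.Monic ∧ P.natDegree = n ∧
        r = L2K L a b P }, t n / C n ≤ r := by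
      rintro r ⟨P, hm, hd, rfl⟩
      rw [div_le_iff₀ (hCpos n)]
      have h1 : t n ≤ supK L a b P := by
        rw [ht n]
        exact csInf_le (hTbdd n) ⟨P, hm, hd, rfl⟩
      calc t n ≤ supK L a b P := h1
        _ ≤ C n * L2K L a b P := hNik n P hd.le
        _ = L2K L a b P * C n := by ring
    have := le_csInf (hSne n) hkey
    rw [← hs n] at this
    rw [div_le_iff₀ (hCpos n)] at this
    calc t n ≤ s n * C n := this
      _ = C n * s n := by ring
  -- ratio bounds
  have hq_lb : ∀ n, (C n)⁻¹ ≤ s n / t n := by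
    intro n
    rw [le_div_iff₀ (htpos n), inv_mul_le_iff₀ (hCpos n)]
    exact hts n
  have hq_ub : ∀ n, s n / t n ≤ Real.sqrt 2 := fun n =>
    (div_le_iff₀ (htpos n)).2 (by rw [mul_comm] at *; exact (hst n).trans_eq (mul_comm _ _))
  -- limits
  have hlimC : Tendsto (fun n : ℕ => (C n) ^ (1/(n:ℝ))) atTop (nhds 1) :=
    root_poly_tendsto_one hE2pos
  have hlim_ub : Tendsto (fun n : ℕ => (Real.sqrt 2) ^ (1/(n:ℝ))) atTop (nhds 1) :=
    root_const_tendsto_one hs2pos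
  have hlim_lb : Tendsto (fun n : ℕ => ((C n)⁻¹) ^ (1/(n:ℝ))) atTop (nhds 1) := by
    have h1 : ∀ n : ℕ, ((C n)⁻¹) ^ (1/(n:ℝ)) = ((C n) ^ (1/(n:ℝ)))⁻¹ := fun n =>
      Real.inv_rpow (hCpos n).le _
    simp only [h1]
    have h2 := hlimC.inv₀ one_ne_zero
    simpa using h2
  have hmain : Tendsto (fun n : ℕ => (s n / t n) ^ (1/(n:ℝ))) atTop (nhds 1) := by
    apply tendsto_of_tendsto_of_tendsto_of_le_of_le hlim_lb hlim_ub
    · intro n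
      exact Real.rpow_le_rpow (inv_nonneg.2 (hCpos n).le) (hq_lb n) (by positivity)
    · intro n
      exact Real.rpow_le_rpow (div_nonneg (hspos n).le (htpos n).le) (hq_ub n) (by positivity)
  constructor
  · apply hmain.congr
    intro n
    rw [Real.div_rpow (hspos n).le (htpos n).le]
  · intro c hc
    have h2 := hmain.mul hc
    rw [one_mul] at h2
    apply h2.congr
    intro n
    rw [Real.div_rpow (hspos n).le (htpos n).le]
    exact div_mul_cancel₀ _ (ne_of_gt (Real.rpow_pos_of_pos (htpos n) _))
end affine
end

section
/- Let 0 < c < 1 and K = [−1, −c] ∪ [c, 1]. For d ∈ ℝ, consider the monic linear polynomial P_d(x) = x − d and its L1 norm ‖P_d‖_{L1(K)} := ∫_{−1}^{−c} |t − d| dt + ∫_{c}^{1} |t − d| dt. Then P_d minimizes ‖·‖_{L1(K)} among all monic polynomials of degree 1 if and only if d ∈ [−c, c]; in particular the set of monic degree-1 minimizers of the L1 norm on K is exactly { x − d : d ∈ [−c, c] }. -/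
open Polynomial MeasureTheory intervalIntegral

noncomputable def Fc (c d : ℝ) : ℝ :=
  (∫ t in (-1 : ℝ)..(-c), |t - d|) + (∫ t in c..(1 : ℝ), |t - d|)

lemma int_right (c d : ℝ) (hc1 : c < 1) (hd : d ≤ c) :
    (∫ t in c..(1 : ℝ), |t - d|) = (1 - c^2)/2 - d*(1-c) := by
  have h : (∫ t in c..(1 : ℝ), |t - d|) = ∫ t in c..(1 : ℝ), (t - d) := by
    apply intervalIntegral.integral_congr
    intro t ht
    rw [Set.uIcc_of_le hc1.le] at ht
    show |t - d| = t - d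
    exact abs_of_nonneg (by linarith [ht.1])
  rw [h]
  rw [intervalIntegral.integral_sub intervalIntegrable_id (intervalIntegrable_const),
    integral_id, intervalIntegral.integral_const, smul_eq_mul]
  ring

lemma int_left (c d : ℝ) (hc1 : c < 1) (hd : -c ≤ d) :
    (∫ t in (-1 : ℝ)..(-c), |t - d|) = d*(1-c) + (1 - c^2)/2 := by
  have h : (∫ t in (-1 : ℝ)..(-c), |t - d|) = ∫ t in (-1 : ℝ)..(-c), (d - t) := by
    apply intervalIntegral.integral_congr
    intro t ht
    rw [Set.uIcc_of_le (by linarith : (-1:ℝ) ≤ -c)] at ht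
    show |t - d| = d - t
    rw [abs_sub_comm]
    exact abs_of_nonneg (by linarith [ht.2])
  rw [h]
  rw [intervalIntegral.integral_sub (intervalIntegrable_const) intervalIntegrable_id,
    integral_id, intervalIntegral.integral_const, smul_eq_mul]
  ring

lemma Fc_mem (c d : ℝ) (hc1 : c < 1) (hd : d ∈ Set.Icc (-c) c) :
    Fc c d = 1 - c^2 := by
  rw [Fc, int_right c d hc1 hd.2, int_left c d hc1 hd.1]; ring

lemma Fc_gt (c d : ℝ) (hc0 : 0 < c) (hc1 : c < 1) (hd : d ∉ Set.Icc (-c) c) :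
    1 - c^2 < Fc c d := by
  rw [Set.mem_Icc, not_and_or, not_le, not_le] at hd
  have habs : Continuous fun t : ℝ => |t - d| := (continuous_id.sub continuous_const).abs
  rcases hd with hd | hd
  · -- d < -c : left integral strictly bigger
    have h1 : (∫ t in (-1 : ℝ)..(-c), (d - t)) < ∫ t in (-1 : ℝ)..(-c), |t - d| := by
      apply intervalIntegral.integral_lt_integral_of_continuousOn_of_le_of_exists_lt
        (by linarith) ((continuous_const.sub continuous_id).continuousOn) habs.continuousOn
      · intro x hx; rw [abs_sub_comm]; exact le_abs_self _
      · refine ⟨-c, Set.right_mem_Icc.2 (by linarith), ?_⟩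
        simp only [Pi.sub_apply, id_eq]
        rw [abs_of_pos (by linarith)]; linarith
    have h2 := int_right c d hc1 (by linarith)
    have h3 : (∫ t in (-1 : ℝ)..(-c), (d - t)) = d*(1-c) + (1 - c^2)/2 := by
      rw [intervalIntegral.integral_sub (intervalIntegrable_const) intervalIntegrable_id,
        integral_id, intervalIntegral.integral_const, smul_eq_mul]
      ring
    rw [Fc, h2]; rw [h3] at h1; linarith
  · -- c < d : right integral strictly bigger
    have h1 : (∫ t in c..(1 : ℝ), (t - d)) < ∫ t in c..(1 : ℝ), |t - d| := by
      apply intervalIntegral.integral_lt_integral_of_continuousOn_of_le_of_exists_lt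
        hc1 ((continuous_id.sub continuous_const).continuousOn) habs.continuousOn
      · intro x hx; exact le_abs_self _
      · refine ⟨c, Set.left_mem_Icc.2 hc1.le, ?_⟩
        simp only [Pi.sub_apply, id_eq]
        rw [abs_of_neg (by linarith)]; linarith
    have h2 := int_left c d hc1 (by linarith)
    have h3 : (∫ t in c..(1 : ℝ), (t - d)) = (1 - c^2)/2 - d*(1-c) := by
      rw [intervalIntegral.integral_sub intervalIntegrable_id (intervalIntegrable_const),
        integral_id, intervalIntegral.integral_const, smul_eq_mul]
      ring
    rw [Fc, h2]; rw [h3] at h1; linarith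

lemma Fc_ge (c d : ℝ) (hc0 : 0 < c) (hc1 : c < 1) : 1 - c^2 ≤ Fc c d := by
  by_cases h : d ∈ Set.Icc (-c) c
  · exact (Fc_mem c d hc1 h).ge
  · exact (Fc_gt c d hc0 hc1 h).le

lemma key (c d : ℝ) (hc0 : 0 < c) (hc1 : c < 1) :
    (∀ e : ℝ, Fc c d ≤ Fc c e) ↔ d ∈ Set.Icc (-c) c := by
  constructor
  · intro h
    by_contra hd
    have := h 0
    rw [Fc_mem c 0 hc1 (by constructor <;> linarith)] at this
    exact absurd this (not_le.2 (Fc_gt c d hc0 hc1 hd))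
  · intro hd e
    rw [Fc_mem c d hc1 hd]
    exact Fc_ge c e hc0 hc1

lemma poly_eval (Q : Polynomial ℝ) (hQ : Q.Monic) (hQ1 : Q.natDegree = 1) :
    ∀ t : ℝ, Q.eval t = t - (-(Q.coeff 0)) := by
  intro t
  conv_lhs => rw [hQ.eq_X_add_C hQ1]
  simp

/-- For `K = [−1,−c] ∪ [c,1]` with `0 < c < 1`, the monic linear polynomial `x − d`
minimizes the `L1` norm on `K` among monic polynomials of degree 1 iff `d ∈ [−c,c]`;
the set of monic degree-1 minimizers is exactly `{x − d : d ∈ [−c,c]}`. -/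
theorem linear_L1_minimizers_two_intervals (c : ℝ) (hc0 : 0 < c) (hc1 : c < 1) :
    (∀ d : ℝ,
      ((∀ Q : Polynomial ℝ, Q.Monic → Q.natDegree = 1 →
        (∫ t in (-1 : ℝ)..(-c), |t - d|) + (∫ t in c..(1 : ℝ), |t - d|) ≤
          (∫ t in (-1 : ℝ)..(-c), |Q.eval t|) + (∫ t in c..(1 : ℝ), |Q.eval t|)) ↔
      d ∈ Set.Icc (-c) c)) ∧
    { Q : Polynomial ℝ | Q.Monic ∧ Q.natDegree = 1 ∧
        ∀ R : Polynomial ℝ, R.Monic → R.natDegree = 1 →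
          (∫ t in (-1 : ℝ)..(-c), |Q.eval t|) + (∫ t in c..(1 : ℝ), |Q.eval t|) ≤
            (∫ t in (-1 : ℝ)..(-c), |R.eval t|) + (∫ t in c..(1 : ℝ), |R.eval t|) }
      = (fun d => Polynomial.X - Polynomial.C d) '' Set.Icc (-c) c := by
  have hint : ∀ (Q : Polynomial ℝ), Q.Monic → Q.natDegree = 1 →
      (∫ t in (-1 : ℝ)..(-c), |Q.eval t|) + (∫ t in c..(1 : ℝ), |Q.eval t|)
        = Fc c (-(Q.coeff 0)) := by
    intro Q hQ hQ1
    have h := poly_eval Q hQ hQ1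
    rw [Fc]
    congr 1 <;> exact intervalIntegral.integral_congr (fun t _ => by rw [h t])
  have hpoly : ∀ d : ℝ,
      (∀ Q : Polynomial ℝ, Q.Monic → Q.natDegree = 1 →
        (∫ t in (-1 : ℝ)..(-c), |t - d|) + (∫ t in c..(1 : ℝ), |t - d|) ≤
          (∫ t in (-1 : ℝ)..(-c), |Q.eval t|) + (∫ t in c..(1 : ℝ), |Q.eval t|)) ↔
      (∀ e : ℝ, Fc c d ≤ Fc c e) := by
    intro d
    constructor
    · intro h e
      have := h (X - C e) (monic_X_sub_C e) (natDegree_X_sub_C e)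
      rwa [hint _ (monic_X_sub_C e) (natDegree_X_sub_C e),
        (by simp : (X - C e : Polynomial ℝ).coeff 0 = -e), neg_neg] at this
    · intro h Q hQ hQ1
      rw [hint Q hQ hQ1]
      exact h _
  constructor
  · intro d
    rw [hpoly d]
    exact key c d hc0 hc1
  · ext Q
    simp only [Set.mem_setOf_eq, Set.mem_image]
    constructor
    · rintro ⟨hQ, hQ1, hmin⟩
      refine ⟨-(Q.coeff 0), ?_, ?_⟩
      · rw [← key c _ hc0 hc1]
        intro e
        have := hmin (X - C e) (monic_X_sub_C e) (natDegree_X_sub_C e)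
        rwa [hint Q hQ hQ1, hint _ (monic_X_sub_C e) (natDegree_X_sub_C e),
          (by simp : (X - C e : Polynomial ℝ).coeff 0 = -e), neg_neg] at this
      · rw [hQ.eq_X_add_C hQ1]
        simp [sub_eq_add_neg]
    · rintro ⟨d, hd, rfl⟩
      refine ⟨monic_X_sub_C d, natDegree_X_sub_C d, ?_⟩
      intro R hR hR1
      rw [hint _ (monic_X_sub_C d) (natDegree_X_sub_C d), hint R hR hR1,
        (by simp : (X - C d : Polynomial ℝ).coeff 0 = -d), neg_neg]
      rw [Fc_mem c d hc1 hd]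
      exact Fc_ge c _ hc0 hc1
end
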